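/- arXiv:1806.09772 — 7 statements merged into one kernel-verified Lean document; each statement's English description precedes it below -/
import Mathlib

section
/- Fix n ≥ 1, r ≥ 1, real numbers 0 = x_{−1} < x₀ < x₁ < ⋯ < x_r = 1, symmetric positive definite n×n real matrices Δ₁, …, Δ_r, a vector h ∈ ℝⁿ, and a symmetric positive definite n×n matrix Λ. Define Λ_r = Λ and Λ_k = Λ_{k+1} − x_k Δ_{k+1} for 0 ≤ k ≤ r−1, and assume Λ₀ is positive definite. Define Y_r : (ℝⁿ)^r → ℝ by Y_r(z₁,…,z_r) = log( (2π)^(−n/2) ∫_{ℝⁿ} exp( ⟨ω, z₁+⋯+z_r+h⟩ − (1/2)⟨Λω, ω⟩ ) dω ), and recursively for 0 ≤ k ≤ r−1 define Y_k : (ℝⁿ)^k → ℝ by Y_k(z₁,…,z_k) = (1/x_k) · log( ((2π)ⁿ det Δ_{k+1})^(−1/2) ∫_{ℝⁿ} exp( x_k · Y_{k+1}(z₁,…,z_k,z) ) · exp(−(1/2)⟨Δ_{k+1}⁻¹ z, z⟩) dz ). Then Y₀ = −(1/2) log det Λ + (1/2)⟨Λ₀⁻¹ h, h⟩ + (1/2)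 Σ_{k=0}^{r−1} (1/x_k) log( det Λ_{k+1} / det Λ_k ). -/
open MeasureTheory Matrix Real

variable {n : ℕ}

lemma herm_transpose {M : Matrix (Fin n) (Fin n) ℝ} (hM : M.IsHermitian) : Mᵀ = M := hM

lemma dot_sym {M : Matrix (Fin n) (Fin n) ℝ} (hM : Mᵀ = M) (u v : Fin n → ℝ) :
    u ⬝ᵥ (M *ᵥ v) = v ⬝ᵥ (M *ᵥ u) := by
  rw [Matrix.dotProduct_mulVec, ← Matrix.mulVec_transpose, hM, dotProduct_comm]

lemma posdef_smul {M : Matrix (Fin n) (Fin n) ℝ} (hM : M.PosDef) {c : ℝ} (hc : 0 < c) :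
    (c • M).PosDef := by
  refine Matrix.PosDef.of_dotProduct_mulVec_pos ?_ (fun x hx => ?_)
  · show (c • M)ᴴ = c • M
    rw [Matrix.conjTranspose_smul]
    rw [show (Mᴴ : Matrix (Fin n) (Fin n) ℝ) = M from hM.isHermitian]
    simp
  · rw [Matrix.smul_mulVec, dotProduct_smul, smul_eq_mul]
    exact mul_pos hc (by simpa using hM.dotProduct_mulVec_pos hx)

lemma posdef_congr {A B : Matrix (Fin n) (Fin n) ℝ} (hA : A.PosDef) (hB : B.det ≠ 0) :
    (Bᵀ * A * B).PosDef := by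
  refine Matrix.PosDef.of_dotProduct_mulVec_pos ?_ (fun x hx => ?_)
  · show (Bᵀ * A * B)ᴴ = Bᵀ * A * B
    have : (Bᵀ * A * B)ᵀ = Bᵀ * Aᵀ * B := by
      rw [Matrix.transpose_mul, Matrix.transpose_mul, Matrix.transpose_transpose, Matrix.mul_assoc]
    rw [show (Bᵀ * A * B)ᴴ = (Bᵀ * A * B)ᵀ from rfl, this, herm_transpose hA.isHermitian]
  · have hBx : B *ᵥ x ≠ 0 := by
      intro h
      apply hx
      have hinj := Matrix.mulVec_injective_iff_isUnit.2 ((Matrix.isUnit_iff_isUnit_det B).2 hB.isUnit)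
      exact hinj (by simpa using h)
    have key : x ⬝ᵥ ((Bᵀ * A * B) *ᵥ x) = (B *ᵥ x) ⬝ᵥ (A *ᵥ (B *ᵥ x)) := by
      rw [Matrix.mul_assoc, ← Matrix.mulVec_mulVec, Matrix.dotProduct_mulVec,
        Matrix.vecMul_transpose, ← Matrix.mulVec_mulVec]
    have := hA.dotProduct_mulVec_pos hBx
    simp only [star_trivial] at this ⊢
    rw [key]
    exact this

lemma posdef_inv_sub_inv {A B : Matrix (Fin n) (Fin n) ℝ} (hA : A.PosDef) (hB : B.PosDef)
    (hAB : (A - B).PosDef) : (B⁻¹ - A⁻¹).PosDef := by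
  refine Matrix.PosDef.of_dotProduct_mulVec_pos (hB.inv.isHermitian.sub hA.inv.isHermitian) (fun v hv => ?_)
  set u := B⁻¹ *ᵥ v with hu_def
  set m := A⁻¹ *ᵥ v with hm_def
  have hu : B *ᵥ u = v := by
    rw [hu_def, Matrix.mulVec_mulVec, Matrix.mul_nonsing_inv _ hB.det_pos.ne'.isUnit, Matrix.one_mulVec]
  have hm : A *ᵥ m = v := by
    rw [hm_def, Matrix.mulVec_mulVec, Matrix.mul_nonsing_inv _ hA.det_pos.ne'.isUnit, Matrix.one_mulVec]
  have hm0 : m ≠ 0 := by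
    intro h
    apply hv
    rw [← hm, h, Matrix.mulVec_zero]
  have pos1 : 0 ≤ (m - u) ⬝ᵥ (B *ᵥ (m - u)) := by simpa using hB.posSemidef.dotProduct_mulVec_nonneg (m - u)
  have pos2 : 0 < m ⬝ᵥ ((A - B) *ᵥ m) := by simpa using hAB.dotProduct_mulVec_pos hm0
  have hsym : u ⬝ᵥ (B *ᵥ m) = m ⬝ᵥ v := by
    rw [dot_sym (herm_transpose hB.isHermitian), hu]
  have hsym2 : m ⬝ᵥ (A *ᵥ m) = m ⬝ᵥ v := by rw [hm]
  have expand1 : (m - u) ⬝ᵥ (B *ᵥ (m - u)) =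
      m ⬝ᵥ (B *ᵥ m) - u ⬝ᵥ (B *ᵥ m) - m ⬝ᵥ v + u ⬝ᵥ v := by
    rw [Matrix.mulVec_sub, hu]
    simp only [sub_dotProduct, dotProduct_sub]
    ring
  have expand2 : m ⬝ᵥ ((A - B) *ᵥ m) = m ⬝ᵥ v - m ⬝ᵥ (B *ᵥ m) := by
    rw [Matrix.sub_mulVec, dotProduct_sub, hsym2]
  have goal_eq : v ⬝ᵥ ((B⁻¹ - A⁻¹) *ᵥ v) = u ⬝ᵥ v - m ⬝ᵥ v := by
    rw [Matrix.sub_mulVec, dotProduct_sub, ← hu_def, ← hm_def,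
      dotProduct_comm v u, dotProduct_comm v m]
  simp only [star_trivial]
  rw [goal_eq]
  linarith [pos1, pos2, hsym, expand1, expand2]

lemma sqrt_pow_comm {a : ℝ} (ha : 0 ≤ a) (k : ℕ) : Real.sqrt a ^ k = Real.sqrt (a ^ k) := by
  induction k with
  | zero => simp
  | succ k ih => rw [pow_succ, pow_succ, ih, ← Real.sqrt_mul (by positivity)]

lemma gauss0 : ∫ w : Fin n → ℝ, rexp (-(1/2) * ∑ i, (w i)^2) = Real.sqrt ((2*π)^n) := by
  have : ∀ w : Fin n → ℝ, rexp (-(1/2) * ∑ i, (w i)^2) = ∏ i, rexp (-(1/2) * (w i)^2) := by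
    intro w
    rw [← Real.exp_sum, Finset.mul_sum]
  simp_rw [this]
  rw [MeasureTheory.volume_pi, MeasureTheory.integral_fintype_prod_eq_pow (ι := Fin n) (fun t : ℝ => rexp (-(1/2) * t^2))]
  have h1 : ∫ t : ℝ, rexp (-(1/2) * t^2) = Real.sqrt (2*π) := by
    have := integral_gaussian (1/2)
    simp only [neg_mul] at this ⊢
    rw [this]
    rw [show π / (1/2) = 2 * π by ring]
  rw [h1, Fintype.card_fin, sqrt_pow_comm (by positivity)]

lemma integral_comp_mulVec (M : Matrix (Fin n) (Fin n) ℝ) (hM : M.det ≠ 0)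
    (f : (Fin n → ℝ) → ℝ) :
    ∫ w : Fin n → ℝ, f (M *ᵥ w) = |M.det|⁻¹ * ∫ w : Fin n → ℝ, f w := by
  have hinv : Invertible M := M.invertibleOfIsUnitDet hM.isUnit
  let e₁ : (Fin n → ℝ) ≃ₗ[ℝ] (Fin n → ℝ) := M.toLinearEquiv' hinv
  let e : (Fin n → ℝ) ≃ᵐ (Fin n → ℝ) :=
    e₁.toContinuousLinearEquiv.toHomeomorph.toMeasurableEquiv
  have he : ⇑e = ⇑(Matrix.toLin' M) := rfl
  have hmap : Measure.map e volume = ENNReal.ofReal |M.det|⁻¹ • volume := by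
    have : Measure.map e volume = Measure.map (Matrix.toLin' M) volume := by
      congr 1
    rw [this, ← abs_inv]
    exact Real.map_matrix_volume_pi_eq_smul_volume_pi hM
  have key := MeasureTheory.integral_map_equiv (μ := volume) e f
  rw [hmap, MeasureTheory.integral_smul_measure] at key
  have happ : ∀ w, e w = M *ᵥ w := fun w => by
    rw [he, Matrix.toLin'_apply]
  simp_rw [happ] at key
  rw [← key, ENNReal.toReal_ofReal (by positivity), smul_eq_mul]

open scoped MatrixOrder in
lemma gauss_centered {S : Matrix (Fin n) (Fin n) ℝ} (hS : S.PosDef) :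
    ∫ w : Fin n → ℝ, rexp (-(1/2) * ((S *ᵥ w) ⬝ᵥ w)) = Real.sqrt ((2*π)^n / S.det) := by
  set T := CFC.sqrt S with hT_def
  have hT2 : T * T = S := CFC.sqrt_mul_sqrt_self S hS.posSemidef.nonneg
  have hTh : T.IsHermitian := (CFC.sqrt_nonneg S).posSemidef.isHermitian
  have hTd_nonneg : 0 ≤ T.det := by
    rw [hTh.det_eq_prod_eigenvalues]
    exact Finset.prod_nonneg fun i _ => (CFC.sqrt_nonneg S).posSemidef.eigenvalues_nonneg i
  have hdetS : T.det ^ 2 = S.det := by rw [← hT2, Matrix.det_mul]; ring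
  have hTd_pos : 0 < T.det := by
    rcases hTd_nonneg.lt_or_eq with h | h
    · exact h
    · exfalso; have := hS.det_pos; rw [← hdetS, ← h] at this; simp at this
  have quad : ∀ w : Fin n → ℝ, (S *ᵥ w) ⬝ᵥ w = ∑ i, ((T *ᵥ w) i)^2 := by
    intro w
    rw [← hT2, ← Matrix.mulVec_mulVec, dotProduct_comm,
      dot_sym (herm_transpose hTh)]
    simp [dotProduct, sq]
  simp_rw [quad]
  rw [integral_comp_mulVec T hTd_pos.ne' (fun u => rexp (-(1/2) * ∑ i, (u i)^2)), gauss0,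
    abs_of_pos hTd_pos]
  rw [show S.det = T.det ^ 2 from hdetS.symm, Real.sqrt_div (by positivity), Real.sqrt_sq hTd_nonneg]
  ring

lemma gauss {S : Matrix (Fin n) (Fin n) ℝ} (hS : S.PosDef) (b : Fin n → ℝ) :
    ∫ w : Fin n → ℝ, rexp (w ⬝ᵥ b - (1/2) * ((S *ᵥ w) ⬝ᵥ w)) =
      Real.sqrt ((2*π)^n / S.det) * rexp ((1/2) * ((S⁻¹ *ᵥ b) ⬝ᵥ b)) := by
  set m := S⁻¹ *ᵥ b with hm_def
  have hm : S *ᵥ m = b := by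
    rw [hm_def, Matrix.mulVec_mulVec, Matrix.mul_nonsing_inv _ hS.det_pos.ne'.isUnit,
      Matrix.one_mulVec]
  have tr : ∫ w : Fin n → ℝ, rexp (w ⬝ᵥ b - (1/2) * ((S *ᵥ w) ⬝ᵥ w)) =
      ∫ w : Fin n → ℝ, rexp ((w + m) ⬝ᵥ b - (1/2) * ((S *ᵥ (w + m)) ⬝ᵥ (w + m))) :=
    (MeasureTheory.integral_add_right_eq_self
      (fun w => rexp (w ⬝ᵥ b - (1/2) * ((S *ᵥ w) ⬝ᵥ w))) m).symm
  rw [tr]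
  have point : ∀ w : Fin n → ℝ, rexp ((w + m) ⬝ᵥ b - (1/2) * ((S *ᵥ (w + m)) ⬝ᵥ (w + m))) =
      rexp ((1/2) * (m ⬝ᵥ b)) * rexp (-(1/2) * ((S *ᵥ w) ⬝ᵥ w)) := by
    intro w
    rw [← Real.exp_add]
    congr 1
    have e1 : (S *ᵥ (w + m)) ⬝ᵥ (w + m) =
        (S *ᵥ w) ⬝ᵥ w + 2 * (w ⬝ᵥ b) + m ⬝ᵥ b := by
      simp only [Matrix.mulVec_add, hm, add_dotProduct, dotProduct_add]
      have h2 : (S *ᵥ w) ⬝ᵥ m = w ⬝ᵥ b := by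
        rw [dotProduct_comm, dot_sym (herm_transpose hS.isHermitian), hm]
      have h3 : b ⬝ᵥ w = w ⬝ᵥ b := dotProduct_comm _ _
      have h4 : b ⬝ᵥ m = m ⬝ᵥ b := dotProduct_comm _ _
      rw [h2, h3, h4]; ring
    rw [add_dotProduct, e1]
    ring
  simp_rw [point]
  rw [MeasureTheory.integral_const_mul, gauss_centered hS]
  ring

lemma sum_snoc_eq {k : ℕ} (z : Fin k → Fin n → ℝ) (w : Fin n → ℝ) :
    (∑ i, (Fin.snoc z w : Fin (k+1) → Fin n → ℝ) i) = (∑ i, z i) + w := by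
  rw [Fin.sum_univ_castSucc]
  simp

lemma two_pi_pow_pos {k : ℕ} : (0:ℝ) < (2*π)^k := by positivity

lemma rpow_half_cancel {k : ℕ} : (2*π : ℝ) ^ (-(k:ℝ)/2) * Real.sqrt ((2*π)^k) = 1 := by
  rw [Real.sqrt_eq_rpow, ← Real.rpow_natCast (2*π) k, ← Real.rpow_mul (by positivity),
    ← Real.rpow_add (by positivity)]
  rw [show -(k:ℝ)/2 + (k:ℝ) * (1/2) = 0 by ring, Real.rpow_zero]

/-- Corollary `closed_form_recur` of the paper.  Closed form of the
Ruelle-probability-cascade recursion for the spherical model.  Given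
`0 = x₋₁ < x₀ < ⋯ < x_r = 1`, positive definite matrices `Δ₁, …, Δ_r`, an external
field `h`, a positive definite matrix `Λ`, and the sequence `Λ_r = Λ`,
`Λ_k = Λ_{k+1} - x_k Δ_{k+1}` with `Λ₀` positive definite, the recursively defined
quantities `Y_k` satisfy
`Y₀ = -(1/2) log det Λ + (1/2)⟨Λ₀⁻¹ h, h⟩ + (1/2) ∑_{k<r} (1/x_k) log (det Λ_{k+1} / det Λ_k)`. -/
theorem stmt1 (n r : ℕ) (hn : 1 ≤ n) (hr : 1 ≤ r)
    (x : ℕ → ℝ) (hx0 : 0 < x 0) (hxmono : ∀ k < r, x k < x (k + 1)) (hxr : x r = 1)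
    (Δ : ℕ → Matrix (Fin n) (Fin n) ℝ) (hΔ : ∀ k, 1 ≤ k → k ≤ r → (Δ k).PosDef)
    (hvec : Fin n → ℝ)
    (Λ : Matrix (Fin n) (Fin n) ℝ) (hΛ : Λ.PosDef)
    (Λseq : ℕ → Matrix (Fin n) (Fin n) ℝ)
    (hΛr : Λseq r = Λ)
    (hΛrec : ∀ k < r, Λseq k = Λseq (k + 1) - x k • Δ (k + 1))
    (hΛ0 : (Λseq 0).PosDef)
    (Y : (k : ℕ) → (Fin k → (Fin n → ℝ)) → ℝ)
    (hYr : ∀ z : Fin r → (Fin n → ℝ),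
      Y r z = Real.log ((2 * Real.pi) ^ (-(n : ℝ) / 2) *
        ∫ ω : Fin n → ℝ,
          Real.exp ((ω ⬝ᵥ (∑ i, z i + hvec)) - (1 / 2) * (Λ.mulVec ω ⬝ᵥ ω))))
    (hYrec : ∀ k, k < r → ∀ z : Fin k → (Fin n → ℝ),
      Y k z = (1 / x k) * Real.log (((2 * Real.pi) ^ n * (Δ (k + 1)).det) ^ (-(1 : ℝ) / 2) *
        ∫ w : Fin n → ℝ,
          Real.exp (x k * Y (k + 1) (Fin.snoc z w)) *
            Real.exp (-(1 / 2) * ((Δ (k + 1))⁻¹.mulVec w ⬝ᵥ w)))) :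
    Y 0 Fin.elim0 = -(1 / 2) * Real.log Λ.det
        + (1 / 2) * ((Λseq 0)⁻¹.mulVec hvec ⬝ᵥ hvec)
        + (1 / 2) * ∑ k ∈ Finset.range r,
            (1 / x k) * Real.log ((Λseq (k + 1)).det / (Λseq k).det) := by
  -- positivity of x
  have hxpos : ∀ k, k ≤ r → 0 < x k := by
    intro k hk
    induction k with
    | zero => exact hx0
    | succ k ih =>
        exact lt_trans (ih (le_of_lt (Nat.lt_of_succ_le hk))) (hxmono k (Nat.lt_of_succ_le hk))
  -- positive definiteness of Λseq k
  have hΛpd : ∀ k, k ≤ r → (Λseq k).PosDef := by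
    intro k hk
    induction k with
    | zero => exact hΛ0
    | succ k ih =>
        have hkr : k < r := Nat.lt_of_succ_le hk
        have heq : Λseq (k+1) = Λseq k + x k • Δ (k+1) := by
          rw [hΛrec k hkr, sub_add_cancel]
        rw [heq]
        exact (ih (le_of_lt hkr)).add (posdef_smul (hΔ (k+1) (by omega) hk)
          (hxpos k (le_of_lt hkr)))
  -- the constant sequence
  set c : ℕ → ℝ := fun k => -(1/2) * Real.log Λ.det +
    (1/2) * ∑ ℓ ∈ Finset.Ico k r, (1/x ℓ) * Real.log ((Λseq (ℓ+1)).det / (Λseq ℓ).det)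
    with hc_def
  -- main downward induction
  have key : ∀ j k, k + j = r → ∀ z : Fin k → (Fin n → ℝ),
      Y k z = c k + (1/2) * (((Λseq k)⁻¹ *ᵥ (∑ i, z i + hvec)) ⬝ᵥ (∑ i, z i + hvec)) := by
    intro j
    induction j with
    | zero =>
        intro k hk z
        have hkr : k = r := by omega
        subst hkr
        rw [hYr z, gauss hΛ (∑ i, z i + hvec), hΛr]
        set b := ∑ i, z i + hvec with hb_def
        have hconst : (2*π:ℝ)^(-(n:ℝ)/2) * (Real.sqrt ((2*π)^n / Λ.det) *
            rexp ((1/2) * ((Λ⁻¹ *ᵥ b) ⬝ᵥ b))) =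
            (Real.sqrt Λ.det)⁻¹ * rexp ((1/2) * ((Λ⁻¹ *ᵥ b) ⬝ᵥ b)) := by
          rw [Real.sqrt_div two_pi_pow_pos.le]
          rw [show (2*π:ℝ)^(-(n:ℝ)/2) * (Real.sqrt ((2*π)^n) / Real.sqrt Λ.det *
              rexp ((1/2) * ((Λ⁻¹ *ᵥ b) ⬝ᵥ b))) =
              ((2*π:ℝ)^(-(n:ℝ)/2) * Real.sqrt ((2*π)^n)) *
              ((Real.sqrt Λ.det)⁻¹ * rexp ((1/2) * ((Λ⁻¹ *ᵥ b) ⬝ᵥ b))) from by ring]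
          rw [rpow_half_cancel, one_mul]
        rw [hconst, Real.log_mul (inv_ne_zero (Real.sqrt_ne_zero'.2 hΛ.det_pos))
          (Real.exp_ne_zero _), Real.log_inv, Real.log_exp, Real.log_sqrt hΛ.det_pos.le]
        simp only [hc_def, Finset.Ico_self, Finset.sum_empty]
        ring
    | succ j ih =>
        intro k hk z
        have hkr : k < r := by omega
        have hk1 : k + 1 ≤ r := hkr
        set D := Δ (k+1) with hD_def
        have hD : D.PosDef := hΔ (k+1) (by omega) hk1
        set A1 := Λseq (k+1) with hA1_def
        set A0 := Λseq k with hA0_def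
        have hA1 : A1.PosDef := hΛpd (k+1) hk1
        have hA0 : A0.PosDef := hΛpd k (le_of_lt hkr)
        have hxk : 0 < x k := hxpos k (le_of_lt hkr)
        have hrec : A0 = A1 - x k • D := hΛrec k hkr
        have hDdet : D.det ≠ 0 := hD.det_pos.ne'
        have hA1det : A1.det ≠ 0 := hA1.det_pos.ne'
        have hA0det : A0.det ≠ 0 := hA0.det_pos.ne'
        set B := D⁻¹ - x k • A1⁻¹ with hB_def
        have hBfact : B = D⁻¹ * A0 * A1⁻¹ := by
          rw [hB_def, hrec, Matrix.mul_sub, mul_smul_comm,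
            Matrix.nonsing_inv_mul D hDdet.isUnit, Matrix.sub_mul, smul_mul_assoc,
            Matrix.one_mul, Matrix.mul_assoc, Matrix.mul_nonsing_inv A1 hA1det.isUnit,
            Matrix.mul_one]
        have hBpd : B.PosDef := by
          have hA' : ((x k)⁻¹ • A1).PosDef := posdef_smul hA1 (inv_pos.2 hxk)
          have hsub : ((x k)⁻¹ • A1 - D).PosDef := by
            have h5 : (x k)⁻¹ • A1 - D = (x k)⁻¹ • A0 := by
              rw [hrec, smul_sub, smul_smul, inv_mul_cancel₀ hxk.ne', one_smul]
            rw [h5]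
            exact posdef_smul hA0 (inv_pos.2 hxk)
          have hinv' : ((x k)⁻¹ • A1)⁻¹ = x k • A1⁻¹ := by
            apply Matrix.inv_eq_right_inv
            rw [smul_mul_assoc, mul_smul_comm, smul_smul, inv_mul_cancel₀ hxk.ne',
              Matrix.mul_nonsing_inv A1 hA1det.isUnit, one_smul]
          have h6 := posdef_inv_sub_inv hA' hD hsub
          rw [hinv'] at h6
          rwa [hB_def]
        have hBdet : B.det = A0.det / (D.det * A1.det) := by
          rw [hBfact, Matrix.det_mul, Matrix.det_mul, Matrix.det_nonsing_inv,
            Matrix.det_nonsing_inv, Ring.inverse_eq_inv']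
          field_simp
        have hBinv : B⁻¹ = A1 * (A0⁻¹ * D) := by
          rw [hBfact, Matrix.mul_inv_rev, Matrix.mul_inv_rev,
            Matrix.nonsing_inv_nonsing_inv D hDdet.isUnit,
            Matrix.nonsing_inv_nonsing_inv A1 hA1det.isUnit]
        have hxkD : x k • D = A1 - A0 := by rw [hrec, sub_sub_cancel]
        have hkey : x k • (A1⁻¹ * B⁻¹ * A1⁻¹) = A0⁻¹ - A1⁻¹ := by
          rw [hBinv]
          rw [show A1⁻¹ * (A1 * (A0⁻¹ * D)) * A1⁻¹ = (A1⁻¹ * A1) * (A0⁻¹ * (D * A1⁻¹)) from by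
            simp only [Matrix.mul_assoc]]
          rw [Matrix.nonsing_inv_mul A1 hA1det.isUnit, Matrix.one_mul]
          rw [show x k • (A0⁻¹ * (D * A1⁻¹)) = A0⁻¹ * ((x k • D) * A1⁻¹) from by
            rw [← mul_smul_comm, ← smul_mul_assoc]]
          rw [hxkD, Matrix.sub_mul, Matrix.mul_nonsing_inv A1 hA1det.isUnit, Matrix.mul_sub,
            Matrix.mul_one, ← Matrix.mul_assoc, Matrix.nonsing_inv_mul A0 hA0det.isUnit,
            Matrix.one_mul]
        -- abbreviations for the vector and the linear term
        set v : Fin n → ℝ := ∑ i, z i + hvec with hv_def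
        set b' : Fin n → ℝ := x k • (A1⁻¹ *ᵥ v) with hb'_def
        set K : ℝ := rexp (x k * c (k+1) + (x k / 2) * ((A1⁻¹ *ᵥ v) ⬝ᵥ v)) with hK_def
        -- pointwise rewriting of the integrand
        have point : ∀ w : Fin n → ℝ,
            rexp (x k * Y (k+1) (Fin.snoc z w)) * rexp (-(1/2) * (D⁻¹ *ᵥ w ⬝ᵥ w)) =
            K * rexp (w ⬝ᵥ b' - (1/2) * ((B *ᵥ w) ⬝ᵥ w)) := by
          intro w
          rw [ih (k+1) (by omega) (Fin.snoc z w), sum_snoc_eq, ← hA1_def]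
          rw [show (∑ i, z i) + w + hvec = v + w from by rw [hv_def]; abel]
          rw [hK_def, ← Real.exp_add, ← Real.exp_add]
          congr 1
          have f1 : (A1⁻¹ *ᵥ (v+w)) ⬝ᵥ (v+w) =
              (A1⁻¹ *ᵥ v) ⬝ᵥ v + 2*(w ⬝ᵥ (A1⁻¹ *ᵥ v)) + (A1⁻¹ *ᵥ w) ⬝ᵥ w := by
            rw [Matrix.mulVec_add]
            simp only [add_dotProduct, dotProduct_add]
            have c1 : (A1⁻¹ *ᵥ v) ⬝ᵥ w = w ⬝ᵥ (A1⁻¹ *ᵥ v) := dotProduct_comm _ _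
            have c2 : (A1⁻¹ *ᵥ w) ⬝ᵥ v = w ⬝ᵥ (A1⁻¹ *ᵥ v) := by
              rw [dotProduct_comm, dot_sym (herm_transpose hA1.inv.isHermitian)]
            rw [c1, c2]; ring
          have f2 : (B *ᵥ w) ⬝ᵥ w = (D⁻¹ *ᵥ w) ⬝ᵥ w - x k * ((A1⁻¹ *ᵥ w) ⬝ᵥ w) := by
            rw [hB_def, Matrix.sub_mulVec, sub_dotProduct, Matrix.smul_mulVec,
              smul_dotProduct, smul_eq_mul]
          have f3 : w ⬝ᵥ b' = x k * (w ⬝ᵥ (A1⁻¹ *ᵥ v)) := by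
            rw [hb'_def, dotProduct_smul, smul_eq_mul]
          rw [f1, f2, f3]
          ring
        -- evaluate the integral
        have hI : (∫ w : Fin n → ℝ,
              rexp (x k * Y (k+1) (Fin.snoc z w)) * rexp (-(1/2) * (D⁻¹ *ᵥ w ⬝ᵥ w))) =
            K * (Real.sqrt ((2*π)^n / B.det) * rexp ((1/2) * ((B⁻¹ *ᵥ b') ⬝ᵥ b'))) := by
          simp_rw [point]
          rw [MeasureTheory.integral_const_mul, gauss hBpd b']
        -- quadratic form identity
        have hq : (B⁻¹ *ᵥ b') ⬝ᵥ b' =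
            x k * ((A0⁻¹ *ᵥ v) ⬝ᵥ v - (A1⁻¹ *ᵥ v) ⬝ᵥ v) := by
          have e1 : (B⁻¹ *ᵥ b') ⬝ᵥ b' =
              (x k * x k) * ((B⁻¹ *ᵥ (A1⁻¹ *ᵥ v)) ⬝ᵥ (A1⁻¹ *ᵥ v)) := by
            rw [hb'_def, Matrix.mulVec_smul, smul_dotProduct, dotProduct_smul,
              smul_eq_mul, smul_eq_mul]
            ring
          have e3 : ((x k • (A1⁻¹ * B⁻¹ * A1⁻¹)) *ᵥ v) ⬝ᵥ v =
              x k * ((B⁻¹ *ᵥ (A1⁻¹ *ᵥ v)) ⬝ᵥ (A1⁻¹ *ᵥ v)) := by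
            rw [Matrix.smul_mulVec, smul_dotProduct, smul_eq_mul]
            congr 1
            rw [← Matrix.mulVec_mulVec, ← Matrix.mulVec_mulVec, dotProduct_comm,
              dot_sym (herm_transpose hA1.inv.isHermitian)]
          have e2 : x k * ((B⁻¹ *ᵥ (A1⁻¹ *ᵥ v)) ⬝ᵥ (A1⁻¹ *ᵥ v)) =
              ((A0⁻¹ - A1⁻¹) *ᵥ v) ⬝ᵥ v := by
            rw [← e3, hkey]
          rw [e1, mul_assoc, e2, Matrix.sub_mulVec, sub_dotProduct]
        -- constant simplification
        have hC : (0:ℝ) < (2*π)^n * D.det := mul_pos two_pi_pow_pos hD.det_pos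
        have hconst2 : ((2*π)^n * D.det : ℝ)^(-(1:ℝ)/2) * Real.sqrt ((2*π)^n / B.det) =
            Real.sqrt (A1.det / A0.det) := by
          have h1 : ((2*π)^n * D.det : ℝ)^(-(1:ℝ)/2) = (Real.sqrt ((2*π)^n * D.det))⁻¹ := by
            rw [show (-(1:ℝ)/2) = -(1/2:ℝ) from by norm_num, Real.rpow_neg hC.le,
              Real.sqrt_eq_rpow]
          have h2 : (2*π:ℝ)^n / B.det = ((2*π)^n * D.det) * (A1.det / A0.det) := by
            rw [hBdet]; field_simp
          rw [h1, h2, Real.sqrt_mul hC.le, inv_mul_cancel_left₀ (Real.sqrt_ne_zero'.2 hC)]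
        -- put everything together
        rw [hYrec k hkr z, ← hD_def, hI, hq]
        have hsplit : ((2*π)^n * D.det : ℝ)^(-(1:ℝ)/2) *
            (K * (Real.sqrt ((2*π)^n / B.det) *
              rexp ((1/2) * (x k * ((A0⁻¹ *ᵥ v) ⬝ᵥ v - (A1⁻¹ *ᵥ v) ⬝ᵥ v))))) =
            Real.sqrt (A1.det / A0.det) *
              rexp (x k * c (k+1) + (x k / 2) * ((A0⁻¹ *ᵥ v) ⬝ᵥ v)) := by
          rw [show ((2*π)^n * D.det : ℝ)^(-(1:ℝ)/2) *
              (K * (Real.sqrt ((2*π)^n / B.det) *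
                rexp ((1/2) * (x k * ((A0⁻¹ *ᵥ v) ⬝ᵥ v - (A1⁻¹ *ᵥ v) ⬝ᵥ v))))) =
              (((2*π)^n * D.det : ℝ)^(-(1:ℝ)/2) * Real.sqrt ((2*π)^n / B.det)) *
              (K * rexp ((1/2) * (x k * ((A0⁻¹ *ᵥ v) ⬝ᵥ v - (A1⁻¹ *ᵥ v) ⬝ᵥ v)))) from by ring]
          rw [hconst2, hK_def, ← Real.exp_add]
          congr 2
          ring
        rw [hsplit]
        have hratio : (0:ℝ) < A1.det / A0.det := div_pos hA1.det_pos hA0.det_pos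
        rw [Real.log_mul (Real.sqrt_ne_zero'.2 hratio) (Real.exp_ne_zero _),
          Real.log_sqrt hratio.le, Real.log_exp]
        have hck : c k = (1/2) * ((1/x k) * Real.log (A1.det / A0.det)) + c (k+1) := by
          have hsum := Finset.sum_eq_sum_Ico_succ_bot hkr
            (fun ℓ => (1/x ℓ) * Real.log ((Λseq (ℓ+1)).det / (Λseq ℓ).det))
          simp only [hc_def]
          rw [hsum, ← hA1_def, ← hA0_def]
          ring
        rw [hck]
        field_simp
        ring
  have h0 := key r 0 (by omega) Fin.elim0
  rw [h0]
  simp only [hc_def]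
  rw [show (∑ i : Fin 0, Fin.elim0 i : Fin n → ℝ) = 0 from rfl]
  rw [zero_add, ← Finset.range_eq_Ico]
  ring
end

section
/- Fix n ≥ 1, r ≥ 1, real numbers 0 = x_{−1} < x₀ < x₁ < ⋯ < x_r = 1, symmetric positive semidefinite n×n real matrices Δ₁, …, Δ_r, and a vector h ∈ ℝⁿ. Let Q be an n×n symmetric positive semidefinite matrix with det Q = 0. Then the infimum over Λ ∈ L of (1/2)·tr(ΛQ) + F(Λ) equals −∞; that is, for every c ∈ ℝ there exists Λ ∈ L with (1/2)·tr(ΛQ) + F(Λ) < c. -/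
open MeasureTheory Matrix Real

/-- The sequence `Λ_k` defined by the downward recursion `Λ_r = Λ`,
`Λ_k = Λ_{k+1} - x_k • Δ_{k+1}` for `0 ≤ k ≤ r-1`; in closed form
`Λ_k = Λ - ∑_{ℓ = k}^{r-1} x_ℓ • Δ_{ℓ+1}`. -/
noncomputable def LamSeq (n r : ℕ) (x : ℕ → ℝ) (Δ : ℕ → Matrix (Fin n) (Fin n) ℝ)
    (Λ : Matrix (Fin n) (Fin n) ℝ) (k : ℕ) : Matrix (Fin n) (Fin n) ℝ :=
  Λ - ∑ ℓ ∈ Finset.Ico k r, x ℓ • Δ (ℓ + 1)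

/-- The set `L` of symmetric positive semidefinite matrices `Λ` with `Λ₀` positive
definite. -/
def Lset (n r : ℕ) (x : ℕ → ℝ) (Δ : ℕ → Matrix (Fin n) (Fin n) ℝ) :
    Set (Matrix (Fin n) (Fin n) ℝ) :=
  {Λ | Λ.PosSemidef ∧ (LamSeq n r x Δ Λ 0).PosDef}

/-- The functional
`F(Λ) = (1/2)( -log det Λ + ⟨Λ₀⁻¹ h, h⟩ + ∑_{k<r} (1/x_k) log(det Λ_{k+1}/det Λ_k) )`. -/
noncomputable def Ffun (n r : ℕ) (x : ℕ → ℝ) (Δ : ℕ → Matrix (Fin n) (Fin n) ℝ)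
    (hvec : Fin n → ℝ) (Λ : Matrix (Fin n) (Fin n) ℝ) : ℝ :=
  (1 / 2) * (-Real.log Λ.det + ((LamSeq n r x Δ Λ 0)⁻¹.mulVec hvec ⬝ᵥ hvec)
    + ∑ k ∈ Finset.range r,
        (1 / x k) * Real.log ((LamSeq n r x Δ Λ (k + 1)).det / (LamSeq n r x Δ Λ k).det))

section AuxLemmas

variable {n : ℕ}

lemma psd_smul' {A : Matrix (Fin n) (Fin n) ℝ} (hA : A.PosSemidef) {c : ℝ} (hc : 0 ≤ c) :
    (c • A).PosSemidef := by
  refine PosSemidef.of_dotProduct_mulVec_nonneg ?_ fun y => ?_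
  · rw [IsHermitian, conjTranspose_smul, star_trivial, hA.1]
  · rw [smul_mulVec, dotProduct_smul]
    exact smul_nonneg hc (hA.dotProduct_mulVec_nonneg y)

lemma quad_inv_mono' {B C : Matrix (Fin n) (Fin n) ℝ} (hB : B.PosDef) (hC : C.PosDef)
    (hBC : (C - B).PosSemidef) (v : Fin n → ℝ) :
    C⁻¹ *ᵥ v ⬝ᵥ v ≤ B⁻¹ *ᵥ v ⬝ᵥ v := by
  set w := C⁻¹ *ᵥ v with hw
  set u := B⁻¹ *ᵥ v with hu
  have hCw : C *ᵥ w = v := by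
    rw [hw, mulVec_mulVec, Matrix.mul_nonsing_inv _ hC.det_pos.ne'.isUnit, one_mulVec]
  have hBu : B *ᵥ u = v := by
    rw [hu, mulVec_mulVec, Matrix.mul_nonsing_inv _ hB.det_pos.ne'.isUnit, one_mulVec]
  have hBsymm : ∀ a b : Fin n → ℝ, B *ᵥ a ⬝ᵥ b = a ⬝ᵥ (B *ᵥ b) := by
    intro a b
    rw [dotProduct_mulVec a B b, ← mulVec_transpose]
    congr 1
    rw [← conjTranspose_eq_transpose_of_trivial, hB.isHermitian.eq]
  have h1 : B *ᵥ w ⬝ᵥ w ≤ v ⬝ᵥ w := by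
    have h0 := hBC.dotProduct_mulVec_nonneg w
    rw [star_trivial, sub_mulVec, dotProduct_sub, hCw] at h0
    have e3 : w ⬝ᵥ (B *ᵥ w) = B *ᵥ w ⬝ᵥ w := dotProduct_comm _ _
    have e5 : w ⬝ᵥ v = v ⬝ᵥ w := dotProduct_comm _ _
    linarith
  have h2 : 0 ≤ v ⬝ᵥ u - 2 * (v ⬝ᵥ w) + B *ᵥ w ⬝ᵥ w := by
    have h0 := hB.posSemidef.dotProduct_mulVec_nonneg (w - u)
    rw [star_trivial, mulVec_sub, dotProduct_sub, sub_dotProduct, sub_dotProduct, hBu] at h0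
    have e2 : u ⬝ᵥ (B *ᵥ w) = v ⬝ᵥ w := by rw [← hBsymm, hBu]
    have e3 : w ⬝ᵥ (B *ᵥ w) = B *ᵥ w ⬝ᵥ w := dotProduct_comm _ _
    have e5 : w ⬝ᵥ v = v ⬝ᵥ w := dotProduct_comm _ _
    have e6 : u ⬝ᵥ v = v ⬝ᵥ u := dotProduct_comm _ _
    linarith
  calc C⁻¹ *ᵥ v ⬝ᵥ v = v ⬝ᵥ w := dotProduct_comm _ _
    _ ≤ v ⬝ᵥ u := by linarith
    _ = B⁻¹ *ᵥ v ⬝ᵥ v := dotProduct_comm _ _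

lemma vecMulVec_mulVec' (v w : Fin n → ℝ) :
    vecMulVec v v *ᵥ w = (v ⬝ᵥ w) • v := by
  funext i
  simp only [mulVec, vecMulVec_apply, dotProduct, Pi.smul_apply, smul_eq_mul,
    Finset.sum_mul]
  exact Finset.sum_congr rfl fun j _ => by ring

lemma psd_vecMulVec' (v : Fin n → ℝ) : (vecMulVec v v).PosSemidef := by
  refine PosSemidef.of_dotProduct_mulVec_nonneg ?_ fun y => ?_
  · ext i j
    simp [conjTranspose_apply, vecMulVec_apply, mul_comm]
  · rw [star_trivial, vecMulVec_mulVec', dotProduct_smul, smul_eq_mul, dotProduct_comm]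
    exact mul_self_nonneg _

lemma det_add_smul_vecMulVec' {B : Matrix (Fin n) (Fin n) ℝ} (hB : B.PosDef)
    (v : Fin n → ℝ) (t : ℝ) :
    (B + t • vecMulVec v v).det = B.det * (1 + t * (B⁻¹ *ᵥ v ⬝ᵥ v)) := by
  have hinv : B⁻¹ᵀ = B⁻¹ := by
    rw [← conjTranspose_eq_transpose_of_trivial, hB.inv.isHermitian.eq]
  have h1 : t • vecMulVec v v = replicateCol Unit (t • v) * replicateRow Unit v := by
    rw [vecMulVec_eq Unit, replicateCol_smul, Matrix.smul_mul]
  rw [h1, det_add_replicateCol_mul_replicateRow hB.det_pos.ne'.isUnit]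
  congr 1
  have h2 : replicateRow Unit v * B⁻¹ = replicateRow Unit (v ᵥ* B⁻¹) := (replicateRow_vecMul _ _).symm
  rw [h2, det_unique, Matrix.add_apply, one_apply_eq, replicateRow_mul_replicateCol_apply]
  have h3 : v ᵥ* B⁻¹ = B⁻¹ *ᵥ v := by rw [← mulVec_transpose, hinv]
  rw [h3, dotProduct_smul, smul_eq_mul, dotProduct_comm]

lemma psd_sum' {m : ℕ} (f : ℕ → Matrix (Fin n) (Fin n) ℝ)
    (h : ∀ i < m, (f i).PosSemidef) : (∑ i ∈ Finset.range m, f i).PosSemidef := by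
  induction m with
  | zero => simpa using Matrix.PosSemidef.zero
  | succ m ih =>
      rw [Finset.sum_range_succ]
      exact (ih fun i hi => h i (by omega)).add (h m (by omega))

end AuxLemmas

/-- Bmat k = 1 + ∑_{ℓ<k} x_ℓ Δ_{ℓ+1} -/
noncomputable def Bmat (n : ℕ) (x : ℕ → ℝ) (Δ : ℕ → Matrix (Fin n) (Fin n) ℝ) (k : ℕ) :
    Matrix (Fin n) (Fin n) ℝ :=
  1 + ∑ ℓ ∈ Finset.range k, x ℓ • Δ (ℓ + 1)

lemma LamSeq_Bmat (n r : ℕ) (x : ℕ → ℝ) (Δ : ℕ → Matrix (Fin n) (Fin n) ℝ)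
    (P : Matrix (Fin n) (Fin n) ℝ) (t : ℝ) {k : ℕ} (hk : k ≤ r) :
    LamSeq n r x Δ (Bmat n x Δ r + t • P) k = Bmat n x Δ k + t • P := by
  unfold LamSeq Bmat
  rw [Finset.range_eq_Ico, Finset.range_eq_Ico, ← Finset.sum_Ico_consecutive (fun ℓ => x ℓ • Δ (ℓ + 1))
    (Nat.zero_le k) hk]
  abel

/-- Lemma `minimizer`, degenerate case.  If `det Q = 0` then
`inf_{Λ ∈ L} ( (1/2) tr(ΛQ) + F(Λ) ) = -∞`. -/
theorem stmt2 (n r : ℕ) (hn : 1 ≤ n) (hr : 1 ≤ r)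
    (x : ℕ → ℝ) (hx0 : 0 < x 0) (hxmono : ∀ k < r, x k < x (k + 1)) (hxr : x r = 1)
    (Δ : ℕ → Matrix (Fin n) (Fin n) ℝ) (hΔ : ∀ k, 1 ≤ k → k ≤ r → (Δ k).PosSemidef)
    (hvec : Fin n → ℝ)
    (Q : Matrix (Fin n) (Fin n) ℝ) (hQ : Q.PosSemidef) (hQdet : Q.det = 0) :
    ∀ c : ℝ, ∃ Λ ∈ Lset n r x Δ,
      (1 / 2) * (Λ * Q).trace + Ffun n r x Δ hvec Λ < c := by
  intro c
  obtain ⟨v, hv0, hQv⟩ := Matrix.exists_mulVec_eq_zero_iff.2 hQdet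
  set P := vecMulVec v v with hPdef
  have hPpsd : P.PosSemidef := psd_vecMulVec' v
  -- positivity of the x k
  have hxpos : ∀ k, k ≤ r → 0 < x k := by
    intro k
    induction k with
    | zero => intro _; exact hx0
    | succ m ih =>
        intro hm
        exact lt_trans (ih (by omega)) (hxmono m (by omega))
  -- the Bmat's are positive definite
  have hBpd : ∀ k, k ≤ r → (Bmat n x Δ k).PosDef := by
    intro k hk
    refine Matrix.PosDef.add_posSemidef Matrix.PosDef.one ?_
    refine psd_sum' _ fun i hi => ?_
    exact psd_smul' (hΔ (i + 1) (by omega) (by omega)) (hxpos i (by omega)).le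
  -- successive differences
  have hdiff : ∀ k, k < r → (Bmat n x Δ (k + 1) - Bmat n x Δ k).PosSemidef := by
    intro k hk
    have he : Bmat n x Δ (k + 1) - Bmat n x Δ k = x k • Δ (k + 1) := by
      unfold Bmat
      rw [Finset.sum_range_succ]
      abel
    rw [he]
    exact psd_smul' (hΔ (k + 1) (by omega) (by omega)) (hxpos k (by omega)).le
  -- the quadratic values
  set a : ℕ → ℝ := fun k => (Bmat n x Δ k)⁻¹ *ᵥ v ⬝ᵥ v with hadef
  have ha_nonneg : ∀ k, k ≤ r → 0 ≤ a k := by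
    intro k hk
    have h0 := (hBpd k hk).inv.posSemidef.dotProduct_mulVec_nonneg v
    rw [star_trivial] at h0
    simpa [hadef, dotProduct_comm] using h0
  have ha_mono : ∀ k, k < r → a (k + 1) ≤ a k :=
    fun k hk => quad_inv_mono' (hBpd k hk.le) (hBpd (k + 1) hk) (hdiff k hk) v
  have har_pos : 0 < a r := by
    have h0 := (hBpd r le_rfl).inv.dotProduct_mulVec_pos hv0
    rw [star_trivial] at h0
    simpa [hadef, dotProduct_comm] using h0
  -- the constant C0 and choice of t
  set C0 : ℝ := (1 / 2) * ((Bmat n x Δ r * Q).trace - Real.log (Bmat n x Δ r).det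
      + hvec ⬝ᵥ hvec
      + ∑ k ∈ Finset.range r,
          (1 / x k) * Real.log ((Bmat n x Δ (k + 1)).det / (Bmat n x Δ k).det)) with hC0
  set t : ℝ := Real.exp (2 * (C0 - c) + 2) / a r with htdef
  have ht : 0 < t := div_pos (Real.exp_pos _) har_pos
  -- the candidate matrix
  refine ⟨Bmat n x Δ r + t • P, ⟨?_, ?_⟩, ?_⟩
  · exact ((hBpd r le_rfl).add_posSemidef (psd_smul' hPpsd ht.le)).posSemidef
  · rw [LamSeq_Bmat n r x Δ P t (Nat.zero_le r)]
    exact (hBpd 0 (Nat.zero_le r)).add_posSemidef (psd_smul' hPpsd ht.le)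
  -- the value estimate
  have hPQ : P * Q = 0 := by
    ext i j
    have hQsymm : ∀ k, Q k j = Q j k :=
      fun k => (star_trivial (Q k j)).symm.trans (hQ.1.apply j k)
    have : (P * Q) i j = v i * (Q *ᵥ v) j := by
      simp only [Matrix.mul_apply, hPdef, vecMulVec_apply, mulVec, dotProduct,
        Finset.mul_sum]
      exact Finset.sum_congr rfl fun k _ => by rw [hQsymm k]; ring
    rw [this, hQv]
    simp
  -- trace term
  have htrace : ((Bmat n x Δ r + t • P) * Q).trace = (Bmat n x Δ r * Q).trace := by
    rw [Matrix.add_mul, Matrix.smul_mul, hPQ, smul_zero, add_zero]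
  -- determinants
  have hdet : ∀ k, k ≤ r →
      (LamSeq n r x Δ (Bmat n x Δ r + t • P) k).det
        = (Bmat n x Δ k).det * (1 + t * a k) := by
    intro k hk
    rw [LamSeq_Bmat n r x Δ P t hk, hPdef, det_add_smul_vecMulVec' (hBpd k hk)]
  have hfac_pos : ∀ k, k ≤ r → 0 < 1 + t * a k := by
    intro k hk
    have := mul_nonneg ht.le (ha_nonneg k hk)
    linarith
  have hdet_pos : ∀ k, k ≤ r → 0 < (Bmat n x Δ k).det := fun k hk => (hBpd k hk).det_pos
  -- bound on the sum term
  have hsum_bound : ∀ k ∈ Finset.range r,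
      (1 / x k) * Real.log ((LamSeq n r x Δ (Bmat n x Δ r + t • P) (k + 1)).det
          / (LamSeq n r x Δ (Bmat n x Δ r + t • P) k).det)
        ≤ (1 / x k) * Real.log ((Bmat n x Δ (k + 1)).det / (Bmat n x Δ k).det) := by
    intro k hkmem
    have hk : k < r := Finset.mem_range.1 hkmem
    have h1 : (0:ℝ) < (Bmat n x Δ (k+1)).det * (1 + t * a (k+1)) :=
      mul_pos (hdet_pos _ hk) (hfac_pos _ hk)
    have h2 : (0:ℝ) < (Bmat n x Δ k).det * (1 + t * a k) :=
      mul_pos (hdet_pos _ hk.le) (hfac_pos _ hk.le)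
    refine mul_le_mul_of_nonneg_left ?_ (one_div_nonneg.2 (hxpos k hk.le).le)
    rw [hdet _ hk, hdet _ hk.le]
    refine (Real.log_le_log_iff (div_pos h1 h2) (div_pos (hdet_pos _ hk) (hdet_pos _ hk.le))).2 ?_
    rw [div_le_div_iff₀ h2 (hdet_pos _ hk.le)]
    have hfle : 1 + t * a (k+1) ≤ 1 + t * a k := by
      have := mul_le_mul_of_nonneg_left (ha_mono k hk) ht.le
      linarith
    have hstep : (Bmat n x Δ (k+1)).det * (1 + t * a (k+1))
        ≤ (Bmat n x Δ (k+1)).det * (1 + t * a k) :=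
      mul_le_mul_of_nonneg_left hfle (hdet_pos _ hk).le
    nlinarith [mul_le_mul_of_nonneg_right hstep (hdet_pos _ hk.le).le]
  have hsum : ∑ k ∈ Finset.range r,
        (1 / x k) * Real.log ((LamSeq n r x Δ (Bmat n x Δ r + t • P) (k + 1)).det
          / (LamSeq n r x Δ (Bmat n x Δ r + t • P) k).det)
      ≤ ∑ k ∈ Finset.range r,
        (1 / x k) * Real.log ((Bmat n x Δ (k + 1)).det / (Bmat n x Δ k).det) :=
    Finset.sum_le_sum hsum_bound
  -- quadratic bound
  have hC0pd' : (Bmat n x Δ 0 + t • P).PosDef :=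
    (hBpd 0 (Nat.zero_le r)).add_posSemidef (psd_smul' hPpsd ht.le)
  have hquad : (LamSeq n r x Δ (Bmat n x Δ r + t • P) 0)⁻¹ *ᵥ hvec ⬝ᵥ hvec
      ≤ hvec ⬝ᵥ hvec := by
    rw [LamSeq_Bmat n r x Δ P t (Nat.zero_le r)]
    have hdiff0 : ((Bmat n x Δ 0 + t • P) - 1).PosSemidef := by
      have he : (Bmat n x Δ 0 + t • P) - 1 = t • P := by
        unfold Bmat
        rw [Finset.range_zero, Finset.sum_empty]
        abel
      rw [he]
      exact psd_smul' hPpsd ht.le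
    have h := quad_inv_mono' Matrix.PosDef.one hC0pd' hdiff0 hvec
    simpa [inv_one, one_mulVec] using h
  -- log of the determinant of Λ itself
  have har_eq : (Bmat n x Δ r)⁻¹ *ᵥ v ⬝ᵥ v = a r := rfl
  have hlogdet : Real.log (Bmat n x Δ r + t • P).det
      = Real.log (Bmat n x Δ r).det + Real.log (1 + t * a r) := by
    rw [hPdef, det_add_smul_vecMulVec' (hBpd r le_rfl), har_eq]
    exact Real.log_mul (hdet_pos r le_rfl).ne' (hfac_pos r le_rfl).ne'
  -- the choice of t makes the log term large
  have htA : t * a r = Real.exp (2 * (C0 - c) + 2) := by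
    rw [htdef]
    field_simp
  have hloggt : 2 * (C0 - c) < Real.log (1 + t * a r) := by
    rw [htA]
    have h1 : Real.exp (2 * (C0 - c)) < 1 + Real.exp (2 * (C0 - c) + 2) := by
      have := Real.exp_lt_exp.2 (show 2 * (C0 - c) < 2 * (C0 - c) + 2 by linarith)
      linarith
    have h2 : (0:ℝ) < 1 + Real.exp (2 * (C0 - c) + 2) := by positivity
    exact (Real.lt_log_iff_exp_lt h2).2 h1
  -- conclusion
  simp only [Ffun]
  rw [htrace, hlogdet]
  linarith [hquad, hsum, hloggt]
end

section
/- Let n ≥ 1, let Λ be an n×n real symmetric positive definite matrix, let Δ be an n×n real symmetric positive semidefinite matrix, and let x ≥ 0. Then det(Λ + xΔ) ≥ det(Λ) · (1 + x·λ_max(Δ)/λ_max(Λ)), where λ_max denotes the largest eigenvalue of a real symmetric matrix. -/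
open Matrix Real

section aux

variable {m : Type*} [Fintype m] [DecidableEq m]

lemma conj_decomp {A : Matrix m m ℝ} (hA : A.IsHermitian) (c x : ℝ) :
    c • (1 : Matrix m m ℝ) + x • A =
      (hA.eigenvectorUnitary : Matrix m m ℝ) *
        Matrix.diagonal (fun i => c + x * hA.eigenvalues i) *
        (star (hA.eigenvectorUnitary : Matrix m m ℝ)) := by
  have hU : (hA.eigenvectorUnitary : Matrix m m ℝ) *
      star (hA.eigenvectorUnitary : Matrix m m ℝ) = 1 :=
    (Matrix.mem_unitaryGroup_iff).mp hA.eigenvectorUnitary.2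
  have hdiag : Matrix.diagonal (fun i => c + x * hA.eigenvalues i) =
      c • (1 : Matrix m m ℝ) + x • Matrix.diagonal (RCLike.ofReal ∘ hA.eigenvalues) := by
    ext i j
    by_cases h : i = j <;>
      simp [Matrix.diagonal_apply, Matrix.one_apply, h]
  rw [hdiag]
  rw [mul_add, add_mul, Matrix.mul_smul, Matrix.smul_mul, Matrix.mul_smul, Matrix.smul_mul,
    mul_one, hU]
  conv_lhs => rw [hA.spectral_theorem, Unitary.conjStarAlgAut_apply]

lemma det_one_add_smul' {A : Matrix m m ℝ} (hA : A.IsHermitian) (x : ℝ) :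
    (1 + x • A).det = ∏ i, (1 + x * hA.eigenvalues i) := by
  have h := conj_decomp hA 1 x
  rw [one_smul] at h
  rw [h, Matrix.det_mul_right_comm, (Matrix.mem_unitaryGroup_iff).mp hA.eigenvectorUnitary.2,
    one_mul, Matrix.det_diagonal]

lemma rayleigh_le' {A : Matrix m m ℝ} (hA : A.IsHermitian) {c : ℝ}
    (hc : ∀ i, hA.eigenvalues i ≤ c) (v : m → ℝ) :
    v ⬝ᵥ A *ᵥ v ≤ c * (v ⬝ᵥ v) := by
  have h := conj_decomp hA c (-1)
  have hpsd : (c • (1 : Matrix m m ℝ) + (-1 : ℝ) • A).PosSemidef := by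
    rw [h, Matrix.star_eq_conjTranspose]
    exact (Matrix.posSemidef_diagonal_iff.mpr fun i => by nlinarith [hc i]
      ).mul_mul_conjTranspose_same _
  have h2 := hpsd.dotProduct_mulVec_nonneg v
  rw [Matrix.add_mulVec, Matrix.smul_mulVec, Matrix.smul_mulVec, Matrix.one_mulVec,
    star_trivial, dotProduct_add, dotProduct_smul, dotProduct_smul, smul_eq_mul, smul_eq_mul,
    neg_one_mul] at h2
  linarith

omit [DecidableEq m] in
lemma exists_max_eig' [Nonempty m] (f : m → ℝ) :
    ∃ i, (∀ j, f j ≤ f i) ∧ (⨆ j, f j) = f i := by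
  obtain ⟨i, hi⟩ := Finite.exists_max f
  exact ⟨i, hi, le_antisymm (ciSup_le hi) (le_ciSup (Set.finite_range f).bddAbove i)⟩

end aux

/-- For `Λ` symmetric positive definite, `Δ` symmetric positive
semidefinite and `x ≥ 0`, one has
`det(Λ + xΔ) ≥ det Λ · (1 + x · λ_max(Δ)/λ_max(Λ))`, where `λ_max` denotes the
largest eigenvalue of a real symmetric matrix. -/
theorem stmt5 (n : ℕ) (hn : 1 ≤ n) (Λ Δ : Matrix (Fin n) (Fin n) ℝ)
    (hΛ : Λ.PosDef) (hΔ : Δ.PosSemidef) (x : ℝ) (hx : 0 ≤ x) :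
    Λ.det * (1 + x * (⨆ i, hΔ.1.eigenvalues i) / (⨆ i, hΛ.1.eigenvalues i)) ≤
      (Λ + x • Δ).det := by
  have hne : Nonempty (Fin n) := ⟨⟨0, hn⟩⟩
  have hS : Λ.PosSemidef := hΛ.posSemidef
  open scoped MatrixOrder in
  set S : Matrix (Fin n) (Fin n) ℝ := CFC.sqrt Λ with hSdef
  open scoped MatrixOrder in
  have hSpsd : S.PosSemidef := (CFC.sqrt_nonneg Λ).posSemidef
  open scoped MatrixOrder in
  have hSS : S * S = Λ := CFC.sqrt_mul_sqrt_self Λ hS.nonneg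
  have hdetΛ : 0 < Λ.det := hΛ.det_pos
  have hdetS : IsUnit S.det := by
    rw [isUnit_iff_ne_zero]
    intro h
    rw [← hSS, Matrix.det_mul, h, mul_zero] at hdetΛ
    exact lt_irrefl _ hdetΛ
  have hSinv : S * S⁻¹ = 1 := Matrix.mul_nonsing_inv S hdetS
  have hinvS : S⁻¹ * S = 1 := Matrix.nonsing_inv_mul S hdetS
  have hSsymm : Sᵀ = S := by
    have h := hSpsd.1
    rwa [Matrix.IsHermitian, Matrix.conjTranspose_eq_transpose_of_trivial] at h
  have hSinvH : (S⁻¹)ᴴ = S⁻¹ := by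
    rw [Matrix.conjTranspose_nonsing_inv, hSpsd.1]
  set N : Matrix (Fin n) (Fin n) ℝ := S⁻¹ * Δ * S⁻¹ with hNdef
  have hN : N.PosSemidef := by
    have h := hΔ.conjTranspose_mul_mul_same (S⁻¹)
    rwa [hSinvH] at h
  have hSNS : S * N * S = Δ := by
    calc S * (S⁻¹ * Δ * S⁻¹) * S = (S * S⁻¹) * (Δ * (S⁻¹ * S)) := by
          simp only [Matrix.mul_assoc]
      _ = Δ := by rw [hSinv, hinvS, mul_one, one_mul]
  have key : S * (1 + x • N) * S = Λ + x • Δ := by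
    rw [mul_add, add_mul, mul_one, hSS, Matrix.mul_smul, Matrix.smul_mul, hSNS]
  have hdet : (Λ + x • Δ).det = Λ.det * (1 + x • N).det := by
    rw [← key, Matrix.det_mul, Matrix.det_mul, ← hSS, Matrix.det_mul]
    ring
  have hmv : ∀ u : Fin n → ℝ, S *ᵥ u = u ᵥ* S := by
    intro u
    nth_rewrite 1 [← hSsymm]
    exact Matrix.mulVec_transpose S u
  have quad : ∀ (B : Matrix (Fin n) (Fin n) ℝ) (u : Fin n → ℝ),
      (S *ᵥ u) ⬝ᵥ B *ᵥ (S *ᵥ u) = u ⬝ᵥ (S * B * S) *ᵥ u := by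
    intro B u
    calc (S *ᵥ u) ⬝ᵥ B *ᵥ (S *ᵥ u) = (u ᵥ* S) ⬝ᵥ B *ᵥ (S *ᵥ u) := by rw [hmv u]
      _ = u ⬝ᵥ S *ᵥ (B *ᵥ (S *ᵥ u)) := (Matrix.dotProduct_mulVec u S _).symm
      _ = u ⬝ᵥ (S * B * S) *ᵥ u := by rw [Matrix.mulVec_mulVec, Matrix.mulVec_mulVec]
  obtain ⟨iΔ, hiΔmax, hiΔsup⟩ := exists_max_eig' (hΔ.1.eigenvalues)
  obtain ⟨iΛ, hiΛmax, hiΛsup⟩ := exists_max_eig' (hΛ.1.eigenvalues)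
  obtain ⟨iN, hiNmax, hiNsup⟩ := exists_max_eig' (hN.1.eigenvalues)
  set a := hΔ.1.eigenvalues iΔ with hadef
  set b := hΛ.1.eigenvalues iΛ with hbdef
  set μ := hN.1.eigenvalues iN with hμdef
  have hb : 0 < b := hΛ.eigenvalues_pos iΛ
  have ha : 0 ≤ a := hΔ.eigenvalues_nonneg iΔ
  have hμ : 0 ≤ μ := hN.eigenvalues_nonneg iN
  set v : Fin n → ℝ := ⇑(hΔ.1.eigenvectorBasis iΔ) with hv
  have hvne : v ≠ 0 := fun h => hΔ.1.eigenvectorBasis.orthonormal.ne_zero iΔ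
    (by ext i; exact congrFun h i)
  have hvv : 0 < v ⬝ᵥ v := by
    rcases lt_or_eq_of_le (Finset.sum_nonneg fun i _ => mul_self_nonneg (v i)) with h | h
    · exact h
    · exact absurd (dotProduct_self_eq_zero.mp h.symm) hvne
  have hΔv : Δ *ᵥ v = a • v := hΔ.1.mulVec_eigenvectorBasis iΔ
  set w : Fin n → ℝ := S *ᵥ v with hw
  have h1 : w ⬝ᵥ N *ᵥ w = a * (v ⬝ᵥ v) := by
    rw [hw, quad N v, hSNS, hΔv, dotProduct_smul, smul_eq_mul]
  have h2 : w ⬝ᵥ w = v ⬝ᵥ Λ *ᵥ v := by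
    have hq := quad 1 v
    rw [Matrix.one_mulVec, mul_one, hSS] at hq
    exact hq
  have h3 : v ⬝ᵥ Λ *ᵥ v ≤ b * (v ⬝ᵥ v) := rayleigh_le' hΛ.1 hiΛmax v
  have h4 : w ⬝ᵥ N *ᵥ w ≤ μ * (w ⬝ᵥ w) := rayleigh_le' hN.1 hiNmax w
  have hab : a ≤ μ * b := by
    have hchain : a * (v ⬝ᵥ v) ≤ (μ * b) * (v ⬝ᵥ v) := by
      rw [← h1]
      calc w ⬝ᵥ N *ᵥ w ≤ μ * (w ⬝ᵥ w) := h4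
        _ = μ * (v ⬝ᵥ Λ *ᵥ v) := by rw [h2]
        _ ≤ μ * (b * (v ⬝ᵥ v)) := mul_le_mul_of_nonneg_left h3 hμ
        _ = (μ * b) * (v ⬝ᵥ v) := by ring
    exact (mul_le_mul_iff_of_pos_right hvv).mp hchain
  rw [hdet, det_one_add_smul' hN.1 x]
  have hprod : 1 + x * μ ≤ ∏ i, (1 + x * hN.1.eigenvalues i) := by
    have hle := Finset.prod_le_prod (s := Finset.univ)
      (f := fun i => if i = iN then 1 + x * μ else 1)
      (g := fun i => 1 + x * hN.1.eigenvalues i)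
      (fun i _ => by split_ifs <;> nlinarith)
      (fun i _ => by
        split_ifs with h
        · rw [h]
        · nlinarith [hN.eigenvalues_nonneg i, hN.eigenvalues_nonneg iN])
    simpa using hle
  have hfrac : x * (⨆ i, hΔ.1.eigenvalues i) / (⨆ i, hΛ.1.eigenvalues i) ≤ x * μ := by
    rw [hiΔsup, hiΛsup, div_le_iff₀ hb]
    nlinarith
  calc Λ.det * (1 + x * (⨆ i, hΔ.1.eigenvalues i) / (⨆ i, hΛ.1.eigenvalues i))
      ≤ Λ.det * (1 + x * μ) := by
        exact mul_le_mul_of_nonneg_left (by linarith) hdetΛ.le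
    _ ≤ Λ.det * ∏ i, (1 + x * hN.1.eigenvalues i) :=
        mul_le_mul_of_nonneg_left hprod hdetΛ.le
end

section
/- Let n ≥ 1 and let A and B be n×n real symmetric positive semidefinite matrices such that A − B is positive semidefinite. Then for every integer m ≥ 1, the matrix A^{∘m} − B^{∘m} is positive semidefinite, where M^{∘m} denotes the m-th entrywise (Hadamard) power of M, i.e. (M^{∘m})_{ij} = (M_{ij})^m. -/
open Matrix


lemma schur_psd {n : ℕ} {A B : Matrix (Fin n) (Fin n) ℝ}
    (hA : A.PosSemidef) (hB : B.PosSemidef) :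
    (Matrix.of fun i j => A i j * B i j).PosSemidef := by
  obtain ⟨D, hD⟩ : ∃ D : Matrix (Fin n) (Fin n) ℝ, B = Dᴴ * D := by
    open MatrixOrder in
    obtain ⟨D, rfl⟩ := CStarAlgebra.nonneg_iff_eq_star_mul_self.mp hB.nonneg
    exact ⟨D, rfl⟩
  refine PosSemidef.of_dotProduct_mulVec_nonneg ?_ ?_
  · ext i j
    simp only [IsHermitian, conjTranspose, Matrix.map_apply, transpose_apply, of_apply,
      star_trivial] at *
    rw [← hA.1.apply, ← hB.1.apply]
    simp [star_trivial]
  · intro x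
    have key : (star x) ⬝ᵥ ((Matrix.of fun i j => A i j * B i j) *ᵥ x)
        = ∑ l, (star (fun i => x i * D l i)) ⬝ᵥ (A *ᵥ (fun i => x i * D l i)) := by
      simp only [dotProduct, mulVec, star_trivial, hD, Matrix.mul_apply, conjTranspose_apply,
        of_apply, Finset.mul_sum, Finset.sum_mul]
      conv_lhs => enter [2, i]; rw [Finset.sum_comm]
      rw [Finset.sum_comm]
      refine Finset.sum_congr rfl fun l _ => Finset.sum_congr rfl fun i _ => Finset.sum_congr rfl fun j _ => ?_
      ring
    rw [key]
    exact Finset.sum_nonneg fun l _ => hA.dotProduct_mulVec_nonneg _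


lemma allones_psd {n : ℕ} : (Matrix.of fun (_ _ : Fin n) => (1:ℝ)).PosSemidef := by
  refine PosSemidef.of_dotProduct_mulVec_nonneg ?_ ?_
  · ext i j; simp [conjTranspose]
  · intro x
    have : (star x) ⬝ᵥ ((Matrix.of fun (_ _ : Fin n) => (1:ℝ)) *ᵥ x)
        = (∑ i, x i) * (∑ j, x j) := by
      simp [dotProduct, mulVec, Finset.sum_mul]
    rw [this]
    exact mul_self_nonneg _

lemma hadpow_psd {n : ℕ} {B : Matrix (Fin n) (Fin n) ℝ} (hB : B.PosSemidef) (m : ℕ) :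
    (Matrix.of fun i j => B i j ^ m).PosSemidef := by
  induction m with
  | zero => simpa using allones_psd
  | succ m ih =>
    have : (Matrix.of fun i j => B i j ^ (m + 1))
        = Matrix.of fun i j => B i j * (Matrix.of fun i j => B i j ^ m) i j := by
      ext i j; simp [pow_succ]; ring
    rw [this]
    exact schur_psd hB ih

/-- If `A`, `B` and `A - B` are symmetric positive semidefinite,
then so is `A^{∘m} - B^{∘m}` for every `m ≥ 1`, where `M^{∘m}` denotes the `m`-th
entrywise (Hadamard) power. -/
theorem stmt7 (n : ℕ) (hn : 1 ≤ n) (A B : Matrix (Fin n) (Fin n) ℝ)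
    (hA : A.PosSemidef) (hB : B.PosSemidef) (hAB : (A - B).PosSemidef)
    (m : ℕ) (hm : 1 ≤ m) :
    ((Matrix.of fun i j => A i j ^ m) - (Matrix.of fun i j => B i j ^ m)).PosSemidef := by
  clear hm hn
  induction m with
  | zero => simpa using (PosSemidef.zero : (0 : Matrix (Fin n) (Fin n) ℝ).PosSemidef)
  | succ m ih =>
    have key : (Matrix.of fun i j => A i j ^ (m + 1)) - (Matrix.of fun i j => B i j ^ (m + 1))
        = (Matrix.of fun i j => A i j *
            (((Matrix.of fun i j => A i j ^ m) - (Matrix.of fun i j => B i j ^ m)) i j))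
          + (Matrix.of fun i j => (A - B) i j * ((Matrix.of fun i j => B i j ^ m) i j)) := by
      ext i j
      simp [pow_succ, Matrix.sub_apply, Matrix.add_apply]
      ring
    rw [key]
    exact (schur_psd hA ih).add (schur_psd hAB (hadpow_psd hB m))
end

section
/- Let n ≥ 1 and c > 0. There exists a constant L, depending only on n and c, such that for every N ≥ 1, every ε with 0 < ε ≤ 1, every pair of configurations σ, σ′ ∈ S_N^n, and every pair of n×n real matrices A, A′ satisfying ‖A‖_∞ ≤ c, ‖A′‖_∞ ≤ c, tr( (A − I)·R(σ,σ)·(A − I)ᵀ ) ≤ c√ε and tr( (A′ − I)·R(σ′,σ′)·(A′ − I)ᵀ ) ≤ c√ε, one has ‖ R(Aσ, A′σ′) − R(σ, σ′) ‖_∞ ≤ L·ε^{1/4}. -/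
open Matrix Real

/-- The entrywise supremum norm `‖M‖_∞ = max_{i,j} |M_{ij}|` of a matrix. -/
noncomputable def supNorm {n : ℕ} (M : Matrix (Fin n) (Fin n) ℝ) : ℝ :=
  ⨆ i, ⨆ j, |M i j|

/-- The `n × n` overlap matrix of two configurations `σ, τ ∈ (ℝ^N)^n`:
`R(σ,τ)_{jj'} = (1/N) ⟨σ(j), τ(j')⟩`. -/
noncomputable def overlap {n N : ℕ} (σ τ : Fin n → Fin N → ℝ) :
    Matrix (Fin n) (Fin n) ℝ :=
  Matrix.of fun j j' => (1 / (N : ℝ)) * ∑ i, σ j i * τ j' i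

/-- The configuration `Aσ` obtained by applying the `n × n` matrix `A` to the
`n`-vector of `i`-th coordinates of `σ`, for each `i ≤ N`. -/
noncomputable def applyMat {n N : ℕ} (A : Matrix (Fin n) (Fin n) ℝ)
    (σ : Fin n → Fin N → ℝ) : Fin n → Fin N → ℝ :=
  fun j i => ∑ k, A j k * σ k i

/-- `B R(σ,τ) B'ᵀ = R(Bσ, B'τ)`, entrywise. -/
lemma mul_overlap_mul {n N : ℕ} (B B' : Matrix (Fin n) (Fin n) ℝ)
    (σ τ : Fin n → Fin N → ℝ) (j j' : Fin n) :
    (B * overlap σ τ * B'ᵀ) j j'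
      = (1 / (N : ℝ)) * ∑ i, applyMat B σ j i * applyMat B' τ j' i := by
  simp only [Matrix.mul_apply, overlap, applyMat, Matrix.of_apply, Matrix.transpose_apply,
    Finset.mul_sum, Finset.sum_mul]
  rw [Finset.sum_comm]
  refine ((Finset.sum_congr rfl fun y _ => Finset.sum_comm).trans ?_)
  rw [Finset.sum_comm]
  refine Finset.sum_congr rfl fun i _ => ?_
  rw [Finset.sum_comm]
  exact Finset.sum_congr rfl fun a _ => Finset.sum_congr rfl fun b _ => by ring

/-- Cauchy–Schwarz with absolute value. -/
lemma abs_sum_mul_le {N : ℕ} (f g : Fin N → ℝ) :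
    |∑ i, f i * g i| ≤ Real.sqrt (∑ i, f i ^ 2) * Real.sqrt (∑ i, g i ^ 2) := by
  calc |∑ i, f i * g i| ≤ ∑ i, |f i| * |g i| := by
        refine (Finset.abs_sum_le_sum_abs _ _).trans ?_
        simp [abs_mul, le_refl]
      _ ≤ Real.sqrt (∑ i, |f i| ^ 2) * Real.sqrt (∑ i, |g i| ^ 2) :=
        Real.sum_mul_le_sqrt_mul_sqrt _ _ _
      _ = Real.sqrt (∑ i, f i ^ 2) * Real.sqrt (∑ i, g i ^ 2) := by simp [sq_abs]

/-- Normalized Cauchy–Schwarz. -/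
lemma inner_bound {N : ℕ} (hN : (0:ℝ) < N) (f g : Fin N → ℝ) :
    |(1 / (N:ℝ)) * ∑ i, f i * g i|
      ≤ Real.sqrt ((1 / (N:ℝ)) * ∑ i, f i ^ 2) * Real.sqrt ((1 / (N:ℝ)) * ∑ i, g i ^ 2) := by
  have h0 : (0:ℝ) < 1 / N := by positivity
  rw [abs_mul, abs_of_pos h0]
  calc (1 / (N:ℝ)) * |∑ i, f i * g i|
      ≤ (1 / (N:ℝ)) * (Real.sqrt (∑ i, f i ^ 2) * Real.sqrt (∑ i, g i ^ 2)) := by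
        exact mul_le_mul_of_nonneg_left (abs_sum_mul_le f g) h0.le
    _ = Real.sqrt ((1 / (N:ℝ)) * ∑ i, f i ^ 2) * Real.sqrt ((1 / (N:ℝ)) * ∑ i, g i ^ 2) := by
        have hss : Real.sqrt (1/(N:ℝ)) * Real.sqrt (1/(N:ℝ)) = 1/(N:ℝ) :=
          Real.mul_self_sqrt h0.le
        rw [Real.sqrt_mul h0.le, Real.sqrt_mul h0.le]
        linear_combination -(Real.sqrt (∑ i, f i ^ 2) * Real.sqrt (∑ i, g i ^ 2)) * hss

/-- the modified overlaps are close to the overlaps, equation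
`overlaps_bound` of the paper.  There is a constant `L = L(n,c)` such that for all
`N ≥ 1`, `0 < ε ≤ 1`, configurations `σ, σ' ∈ S_N^n` and matrices `A, A'` with
`‖A‖_∞, ‖A'‖_∞ ≤ c`, `tr((A-I) R(σ,σ) (A-I)ᵀ) ≤ c√ε` and
`tr((A'-I) R(σ',σ') (A'-I)ᵀ) ≤ c√ε`, one has
`‖R(Aσ, A'σ') - R(σ,σ')‖_∞ ≤ L ε^{1/4}`. -/
theorem stmt11 (n : ℕ) (hn : 1 ≤ n) (c : ℝ) (hc : 0 < c) :
    ∃ L : ℝ, ∀ N : ℕ, 1 ≤ N → ∀ ε : ℝ, 0 < ε → ε ≤ 1 →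
      ∀ σ σ' : Fin n → Fin N → ℝ,
        (∀ j, ∑ i, σ j i ^ 2 = (N : ℝ)) → (∀ j, ∑ i, σ' j i ^ 2 = (N : ℝ)) →
      ∀ A A' : Matrix (Fin n) (Fin n) ℝ,
        supNorm A ≤ c → supNorm A' ≤ c →
        ((A - 1) * overlap σ σ * (A - 1)ᵀ).trace ≤ c * Real.sqrt ε →
        ((A' - 1) * overlap σ' σ' * (A' - 1)ᵀ).trace ≤ c * Real.sqrt ε →
        supNorm (overlap (applyMat A σ) (applyMat A' σ') - overlap σ σ') ≤
          L * ε ^ ((1 : ℝ) / 4) := by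
  refine ⟨2 * Real.sqrt c + c, ?_⟩
  intro N hN ε hε hε1 σ σ' hσ hσ' A A' _ _ htr htr'
  have hNpos : (0 : ℝ) < N := by exact_mod_cast hN
  haveI : Nonempty (Fin n) := ⟨⟨0, hn⟩⟩
  set u := applyMat (A - 1) σ with hu
  set v := applyMat (A' - 1) σ' with hv
  have hdec : ∀ j i, applyMat A σ j i = σ j i + u j i := by
    intro j i
    simp only [hu, applyMat, Matrix.sub_apply, sub_mul, Finset.sum_sub_distrib]
    have h1 : ∑ k, (1 : Matrix (Fin n) (Fin n) ℝ) j k * σ k i = σ j i := by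
      simp [Matrix.one_apply, Finset.sum_ite_eq]
    rw [h1]; ring
  have hdec' : ∀ j i, applyMat A' σ' j i = σ' j i + v j i := by
    intro j i
    simp only [hv, applyMat, Matrix.sub_apply, sub_mul, Finset.sum_sub_distrib]
    have h1 : ∑ k, (1 : Matrix (Fin n) (Fin n) ℝ) j k * σ' k i = σ' j i := by
      simp [Matrix.one_apply, Finset.sum_ite_eq]
    rw [h1]; ring
  -- each diagonal term of the trace is at most the trace
  have hsraw : ∀ j, (1 / (N : ℝ)) * ∑ i, u j i ^ 2 ≤ c * Real.sqrt ε := by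
    intro j
    have hdiag : ∀ k, (((A - 1) * overlap σ σ * (A - 1)ᵀ : Matrix (Fin n) (Fin n) ℝ)) k k
        = (1 / (N : ℝ)) * ∑ i, u k i ^ 2 := by
      intro k; rw [mul_overlap_mul]; simp [hu, sq]
    refine le_trans ?_ htr
    rw [Matrix.trace]
    calc (1 / (N : ℝ)) * ∑ i, u j i ^ 2
        = (((A - 1) * overlap σ σ * (A - 1)ᵀ : Matrix (Fin n) (Fin n) ℝ)) j j := (hdiag j).symm
      _ ≤ ∑ k, Matrix.diag (((A - 1) * overlap σ σ * (A - 1)ᵀ : Matrix (Fin n) (Fin n) ℝ)) k := by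
          refine Finset.single_le_sum (f := fun k => (((A - 1) * overlap σ σ * (A - 1)ᵀ : Matrix (Fin n) (Fin n) ℝ)) k k)
            (fun k _ => le_of_le_of_eq (by positivity) (hdiag k).symm) (Finset.mem_univ j)
  have hsraw' : ∀ j, (1 / (N : ℝ)) * ∑ i, v j i ^ 2 ≤ c * Real.sqrt ε := by
    intro j
    have hdiag : ∀ k, (((A' - 1) * overlap σ' σ' * (A' - 1)ᵀ : Matrix (Fin n) (Fin n) ℝ)) k k
        = (1 / (N : ℝ)) * ∑ i, v k i ^ 2 := by
      intro k; rw [mul_overlap_mul]; simp [hv, sq]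
    refine le_trans ?_ htr'
    rw [Matrix.trace]
    calc (1 / (N : ℝ)) * ∑ i, v j i ^ 2
        = (((A' - 1) * overlap σ' σ' * (A' - 1)ᵀ : Matrix (Fin n) (Fin n) ℝ)) j j := (hdiag j).symm
      _ ≤ ∑ k, Matrix.diag (((A' - 1) * overlap σ' σ' * (A' - 1)ᵀ : Matrix (Fin n) (Fin n) ℝ)) k := by
          refine Finset.single_le_sum (f := fun k => (((A' - 1) * overlap σ' σ' * (A' - 1)ᵀ : Matrix (Fin n) (Fin n) ℝ)) k k)
            (fun k _ => le_of_le_of_eq (by positivity) (hdiag k).symm) (Finset.mem_univ j)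
  -- useful facts about ε
  have hcs : (0:ℝ) ≤ c * Real.sqrt ε := by positivity
  have hq : Real.sqrt (Real.sqrt ε) = ε ^ ((1:ℝ)/4) := by
    rw [Real.sqrt_eq_rpow, Real.sqrt_eq_rpow, ← Real.rpow_mul hε.le]
    norm_num
  have hqs : Real.sqrt (c * Real.sqrt ε) = Real.sqrt c * ε ^ ((1:ℝ)/4) := by
    rw [Real.sqrt_mul hc.le, hq]
  have hse : Real.sqrt ε ≤ ε ^ ((1:ℝ)/4) := by
    rw [Real.sqrt_eq_rpow]
    exact Real.rpow_le_rpow_of_exponent_ge hε hε1 (by norm_num)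
  -- entrywise bound
  have key : ∀ j j', |(overlap (applyMat A σ) (applyMat A' σ') - overlap σ σ') j j'|
      ≤ (2 * Real.sqrt c + c) * ε ^ ((1:ℝ)/4) := by
    intro j j'
    have expand : ∑ i, applyMat A σ j i * applyMat A' σ' j' i
        = ∑ i, σ j i * σ' j' i
          + (∑ i, u j i * σ' j' i + ∑ i, σ j i * v j' i + ∑ i, u j i * v j' i) := by
      rw [← Finset.sum_add_distrib, ← Finset.sum_add_distrib, ← Finset.sum_add_distrib]
      exact Finset.sum_congr rfl fun i _ => by rw [hdec, hdec']; ring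
    have hent : (overlap (applyMat A σ) (applyMat A' σ') - overlap σ σ') j j'
        = (1 / (N : ℝ)) * ∑ i, u j i * σ' j' i
        + (1 / (N : ℝ)) * ∑ i, σ j i * v j' i
        + (1 / (N : ℝ)) * ∑ i, u j i * v j' i := by
      simp only [Matrix.sub_apply, overlap, Matrix.of_apply, expand]
      ring
    have hσ1 : (1 / (N : ℝ)) * ∑ i, σ j i ^ 2 = 1 := by
      rw [hσ j]; field_simp
    have hσ'1 : (1 / (N : ℝ)) * ∑ i, σ' j' i ^ 2 = 1 := by
      rw [hσ' j']; field_simp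
    have hu2 : (0:ℝ) ≤ (1 / (N : ℝ)) * ∑ i, u j i ^ 2 := by positivity
    have hv2 : (0:ℝ) ≤ (1 / (N : ℝ)) * ∑ i, v j' i ^ 2 := by positivity
    have b1 : |(1 / (N : ℝ)) * ∑ i, u j i * σ' j' i| ≤ Real.sqrt (c * Real.sqrt ε) := by
      refine (inner_bound hNpos _ _).trans ?_
      rw [hσ'1, Real.sqrt_one, mul_one]
      exact Real.sqrt_le_sqrt (hsraw j)
    have b2 : |(1 / (N : ℝ)) * ∑ i, σ j i * v j' i| ≤ Real.sqrt (c * Real.sqrt ε) := by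
      refine (inner_bound hNpos _ _).trans ?_
      rw [hσ1, Real.sqrt_one, one_mul]
      exact Real.sqrt_le_sqrt (hsraw' j')
    have b3 : |(1 / (N : ℝ)) * ∑ i, u j i * v j' i| ≤ c * Real.sqrt ε := by
      refine (inner_bound hNpos _ _).trans ?_
      calc Real.sqrt ((1 / (N : ℝ)) * ∑ i, u j i ^ 2)
            * Real.sqrt ((1 / (N : ℝ)) * ∑ i, v j' i ^ 2)
          ≤ Real.sqrt (c * Real.sqrt ε) * Real.sqrt (c * Real.sqrt ε) := by
            exact mul_le_mul (Real.sqrt_le_sqrt (hsraw j)) (Real.sqrt_le_sqrt (hsraw' j'))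
              (Real.sqrt_nonneg _) (Real.sqrt_nonneg _)
        _ = c * Real.sqrt ε := Real.mul_self_sqrt hcs
    rw [hent]
    calc |(1 / (N : ℝ)) * ∑ i, u j i * σ' j' i
          + (1 / (N : ℝ)) * ∑ i, σ j i * v j' i
          + (1 / (N : ℝ)) * ∑ i, u j i * v j' i|
        ≤ |(1 / (N : ℝ)) * ∑ i, u j i * σ' j' i
          + (1 / (N : ℝ)) * ∑ i, σ j i * v j' i|
          + |(1 / (N : ℝ)) * ∑ i, u j i * v j' i| := abs_add_le _ _
      _ ≤ (|(1 / (N : ℝ)) * ∑ i, u j i * σ' j' i|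
          + |(1 / (N : ℝ)) * ∑ i, σ j i * v j' i|)
          + |(1 / (N : ℝ)) * ∑ i, u j i * v j' i| := by
            exact add_le_add_left (abs_add_le _ _) _
      _ ≤ (Real.sqrt (c * Real.sqrt ε) + Real.sqrt (c * Real.sqrt ε)) + c * Real.sqrt ε := by
            exact add_le_add (add_le_add b1 b2) b3
      _ = 2 * Real.sqrt c * ε ^ ((1:ℝ)/4) + c * Real.sqrt ε := by rw [hqs]; ring
      _ ≤ 2 * Real.sqrt c * ε ^ ((1:ℝ)/4) + c * ε ^ ((1:ℝ)/4) := by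
            exact add_le_add_right (mul_le_mul_of_nonneg_left hse hc.le) _
      _ = (2 * Real.sqrt c + c) * ε ^ ((1:ℝ)/4) := by ring
  exact ciSup_le fun i => ciSup_le fun j => key i j
end

section
/- For every M ≥ 1 and every R > 0 there exists N₀ such that for all integers N ≥ N₀ and all x ∈ ℝ^M with |x_j| ≤ R for every j ≤ M, one has Σ_{j=1}^{M} ((M + N − j − 2)/2) · log( 1 − x_j²/(M + N + 1 − j) ) ≥ − ‖x‖²/2 − ‖x‖⁴/(2N), where ‖x‖² = Σ_{j=1}^M x_j². Equivalently, the density f_{M,N}(x) = b_{M,N}·∏_{j=1}^{M}(1 − x_j²/(M+N+1−j))^{(M+N−j−2)/2} satisfies log( f_{M,N}(x)/f_M(x) ) ≥ log( b_{M,N}·(2π)^{M/2} ) − ‖x‖⁴/(2N), where f_M(x) = (2π)^{−M/2}·exp(−‖x‖²/2). -/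
open Real

lemma key_ineq (R N c s : ℝ) (hN : R^4 + R^2 + 3 ≤ N) (hc : N + 1 ≤ c)
    (hs0 : 0 ≤ s) (hsR : s ≤ R^2) :
    -s/2 - s^2/(2*N) ≤ ((c-3)/2) * Real.log (1 - s/c) := by
  have hR4 : (0:ℝ) ≤ R^4 := by positivity
  have hR2 : (0:ℝ) ≤ R^2 := by positivity
  have hN3 : (3:ℝ) ≤ N := by linarith
  have hNpos : (0:ℝ) < N := by linarith
  have hc0 : (0:ℝ) < c := by linarith
  have hcs : (0:ℝ) < c - s := by linarith
  have hlog : -(s/(c-s)) ≤ Real.log (1 - s/c) := by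
    have h1 : 1 - s/c = (c-s)/c := by field_simp
    have h2 : Real.log ((c-s)/c) = - Real.log (c/(c-s)) := by
      rw [← Real.log_inv]
      congr 1
      field_simp
    have h3 := Real.log_le_sub_one_of_pos (show (0:ℝ) < c/(c-s) by positivity)
    have h4 : c/(c-s) - 1 = s/(c-s) := by field_simp; ring
    rw [h1, h2]
    linarith
  have hc3 : (0:ℝ) ≤ (c-3)/2 := by linarith
  have step1 : ((c-3)/2) * (-(s/(c-s))) ≤ ((c-3)/2) * Real.log (1 - s/c) :=
    mul_le_mul_of_nonneg_left hlog hc3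
  have hs2 : s^2 ≤ R^4 := by nlinarith
  have e : ((c-3)/2) * (-(s/(c-s))) - (-s/2 - s^2/(2*N)) =
      s * (3*N + s*(c - N - s)) / (2*N*(c-s)) := by
    field_simp
    ring
  have hnum : 0 ≤ s * (3*N + s*(c - N - s)) := by
    nlinarith [mul_nonneg (mul_nonneg hs0 hs0) (show (0:ℝ) ≤ c - N - 1 by linarith),
      mul_le_mul_of_nonneg_left hs2 hs0, mul_nonneg hs0 hs0]
  have hpos : 0 ≤ s * (3*N + s*(c - N - s)) / (2*N*(c-s)) :=
    div_nonneg hnum (by positivity)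
  linarith

/-- density comparison in Step 2 of Lemma `ASS_Pert`/`ass_unpert`.
For every `M ≥ 1` and `R > 0` there is `N₀` such that for all `N ≥ N₀` and all
`x ∈ ℝ^M` with `|x_j| ≤ R`,
`∑_{j=1}^M ((M+N-j-2)/2) log(1 - x_j²/(M+N+1-j)) ≥ -‖x‖²/2 - ‖x‖⁴/(2N)`. -/
theorem stmt14 (M : ℕ) (hM : 1 ≤ M) (R : ℝ) (hR : 0 < R) :
    ∃ N₀ : ℕ, ∀ N : ℕ, N₀ ≤ N → ∀ x : Fin M → ℝ, (∀ j, |x j| ≤ R) →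
      -(∑ j, x j ^ 2) / 2 - (∑ j, x j ^ 2) ^ 2 / (2 * (N : ℝ)) ≤
        ∑ j : Fin M,
          (((M : ℝ) + N - ((j : ℕ) + 1) - 2) / 2) *
            Real.log (1 - x j ^ 2 / ((M : ℝ) + N + 1 - ((j : ℕ) + 1))) := by
  refine ⟨⌈R^4 + R^2 + 3⌉₊, fun N hN x hx => ?_⟩
  have hNR : R^4 + R^2 + 3 ≤ (N:ℝ) := by
    calc R^4 + R^2 + 3 ≤ (⌈R^4 + R^2 + 3⌉₊ : ℝ) := Nat.le_ceil _
    _ ≤ N := Nat.cast_le.mpr hN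
  have hR4 : (0:ℝ) ≤ R^4 := by positivity
  have hR2 : (0:ℝ) ≤ R^2 := by positivity
  have hNpos : (0:ℝ) < N := by linarith
  have hterm : ∀ j : Fin M,
      -(x j ^ 2)/2 - (x j ^ 2)^2/(2*(N:ℝ)) ≤
        (((M : ℝ) + N - ((j : ℕ) + 1) - 2) / 2) *
          Real.log (1 - x j ^ 2 / ((M : ℝ) + N + 1 - ((j : ℕ) + 1))) := by
    intro j
    have hjM : ((j:ℕ):ℝ) + 1 ≤ (M:ℝ) := by exact_mod_cast j.isLt
    have hc : (N:ℝ) + 1 ≤ (M:ℝ) + N + 1 - ((j:ℕ) + 1) := by linarith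
    have hxj : x j ^ 2 ≤ R^2 := by
      nlinarith [hx j, abs_nonneg (x j), sq_abs (x j)]
    have h := key_ineq R N ((M:ℝ) + N + 1 - ((j:ℕ) + 1)) (x j ^ 2) hNR hc
      (sq_nonneg _) hxj
    have hcoef : ((M : ℝ) + N - ((j : ℕ) + 1) - 2) =
        ((M:ℝ) + N + 1 - ((j:ℕ) + 1)) - 3 := by ring
    rw [hcoef]
    exact h
  have hsum := Finset.sum_le_sum (fun j (_ : j ∈ Finset.univ) => hterm j)
  have hs4 : ∑ j : Fin M, (x j ^ 2)^2 ≤ (∑ j : Fin M, x j ^ 2)^2 := by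
    have h1 : ∀ j : Fin M, (x j ^ 2)^2 ≤ (x j ^ 2) * ∑ k : Fin M, x k ^ 2 := by
      intro j
      have h0 : x j ^ 2 ≤ ∑ k : Fin M, x k ^ 2 :=
        Finset.single_le_sum (f := fun k : Fin M => x k ^ 2)
          (fun k _ => sq_nonneg (x k)) (Finset.mem_univ j)
      calc (x j ^ 2)^2 = (x j ^ 2) * (x j ^ 2) := sq (x j ^ 2) ▸ rfl
      _ ≤ (x j ^ 2) * ∑ k : Fin M, x k ^ 2 :=
        mul_le_mul_of_nonneg_left h0 (sq_nonneg (x j))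
    calc ∑ j : Fin M, (x j ^ 2)^2 ≤ ∑ j : Fin M, (x j ^ 2) * ∑ k : Fin M, x k ^ 2 :=
          Finset.sum_le_sum (fun j _ => h1 j)
    _ = (∑ j : Fin M, x j ^ 2)^2 := by rw [← Finset.sum_mul]; ring
  have e2 : ∑ j : Fin M, (-(x j ^ 2)/2 - (x j ^ 2)^2/(2*(N:ℝ))) =
      -(∑ j : Fin M, x j ^ 2)/2 - (∑ j : Fin M, (x j ^ 2)^2)/(2*(N:ℝ)) := by
    rw [Finset.sum_sub_distrib, ← Finset.sum_div, ← Finset.sum_div, ← Finset.sum_neg_distrib]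
  have h5 : (∑ j : Fin M, (x j ^ 2)^2)/(2*(N:ℝ)) ≤ (∑ j : Fin M, x j ^ 2)^2/(2*(N:ℝ)) := by
    gcongr
  linarith [hsum, e2, h5]
end

section
/- For every fixed M ≥ 1, lim_{N→∞} ∏_{j=1}^{M} Γ((M+N+1−j)/2) / ( √π · Γ((M+N−j)/2) · √(M+N+1−j) ) = (2π)^{−M/2}. Equivalently, the normalizing constants b_{M,N} = ∏_{j=1}^{M} |S¹_{M+N−j}| / ( |S¹_{M+N+1−j}| · √(M+N+1−j) ), where |S¹_K| = 2π^{K/2}/Γ(K/2) is the surface area of the unit sphere in ℝ^K, converge to (2π)^{−M/2} as N → ∞. -/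
open Filter Real Topology

lemma gautschi_upper {x : ℝ} (hx : 0 < x) :
    Real.Gamma (x + 1/2) ≤ Real.Gamma x * Real.sqrt x := by
  have h := Real.convexOn_log_Gamma.2 (Set.mem_Ioi.2 hx)
    (Set.mem_Ioi.2 (by linarith : (0:ℝ) < x + 1))
    (by norm_num : (0:ℝ) ≤ 1/2) (by norm_num : (0:ℝ) ≤ 1/2) (by norm_num)
  simp only [smul_eq_mul, Function.comp_apply] at h
  have e : (1/2:ℝ) * x + 1/2 * (x+1) = x + 1/2 := by ring
  rw [e, Real.Gamma_add_one hx.ne', Real.log_mul hx.ne'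
    (Real.Gamma_pos_of_pos hx).ne'] at h
  have h2 : Real.log (Real.Gamma (x + 1/2)) ≤
      Real.log (Real.Gamma x) + 1/2 * Real.log x := by linarith
  have hpos : 0 < Real.Gamma (x + 1/2) := Real.Gamma_pos_of_pos (by linarith)
  calc Real.Gamma (x + 1/2) = Real.exp (Real.log (Real.Gamma (x + 1/2))) :=
        (Real.exp_log hpos).symm
    _ ≤ Real.exp (Real.log (Real.Gamma x) + 1/2 * Real.log x) := Real.exp_le_exp.2 h2
    _ = Real.Gamma x * Real.sqrt x := by
        rw [Real.exp_add, Real.exp_log (Real.Gamma_pos_of_pos hx),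
          Real.sqrt_eq_rpow, Real.rpow_def_of_pos hx]
        ring_nf

lemma gautschi_lower {x : ℝ} (hx : 0 < x) :
    x * Real.Gamma x ≤ Real.Gamma (x + 1/2) * Real.sqrt (x + 1/2) := by
  have hx2 : (0:ℝ) < x + 1/2 := by linarith
  have h := Real.convexOn_log_Gamma.2 (Set.mem_Ioi.2 hx2)
    (Set.mem_Ioi.2 (by linarith : (0:ℝ) < x + 3/2))
    (by norm_num : (0:ℝ) ≤ 1/2) (by norm_num : (0:ℝ) ≤ 1/2) (by norm_num)
  simp only [smul_eq_mul, Function.comp_apply] at h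
  have e : (1/2:ℝ) * (x + 1/2) + 1/2 * (x + 3/2) = x + 1 := by ring
  have e2 : (x:ℝ) + 3/2 = (x + 1/2) + 1 := by ring
  rw [e, e2, Real.Gamma_add_one hx2.ne', Real.log_mul hx2.ne'
    (Real.Gamma_pos_of_pos hx2).ne', Real.Gamma_add_one hx.ne',
    Real.log_mul hx.ne' (Real.Gamma_pos_of_pos hx).ne'] at h
  have h2 : Real.log x + Real.log (Real.Gamma x) ≤
      Real.log (Real.Gamma (x + 1/2)) + 1/2 * Real.log (x + 1/2) := by linarith
  have hpos : 0 < Real.Gamma (x + 1/2) := Real.Gamma_pos_of_pos hx2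
  calc x * Real.Gamma x
      = Real.exp (Real.log x + Real.log (Real.Gamma x)) := by
        rw [Real.exp_add, Real.exp_log hx, Real.exp_log (Real.Gamma_pos_of_pos hx)]
    _ ≤ Real.exp (Real.log (Real.Gamma (x + 1/2)) + 1/2 * Real.log (x + 1/2)) :=
        Real.exp_le_exp.2 h2
    _ = Real.Gamma (x + 1/2) * Real.sqrt (x + 1/2) := by
        rw [Real.exp_add, Real.exp_log hpos, Real.sqrt_eq_rpow,
          Real.rpow_def_of_pos hx2]
        ring_nf
lemma tendsto_ratio_half : Tendsto (fun x : ℝ => x / (2*x+1)) atTop (𝓝 (1/2)) := by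
  have h : Tendsto (fun x : ℝ => (2 + x⁻¹)⁻¹) atTop (𝓝 ((2:ℝ)⁻¹)) := by
    have := (tendsto_const_nhds.add tendsto_inv_atTop_zero :
      Tendsto (fun x : ℝ => 2 + x⁻¹) atTop (𝓝 (2 + 0)))
    rw [add_zero] at this
    exact this.inv₀ two_ne_zero
  rw [show (1/2 : ℝ) = (2:ℝ)⁻¹ by norm_num]
  refine h.congr' ?_
  filter_upwards [eventually_gt_atTop (0:ℝ)] with x hx
  field_simp

lemma tendsto_ratio_one : Tendsto (fun x : ℝ => x / (x+1/2)) atTop (𝓝 1) := by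
  have h : Tendsto (fun x : ℝ => (1 + (1/2) * x⁻¹)⁻¹) atTop (𝓝 ((1:ℝ)⁻¹)) := by
    have := (tendsto_const_nhds.add (tendsto_inv_atTop_zero.const_mul (1/2:ℝ)) :
      Tendsto (fun x : ℝ => 1 + (1/2) * x⁻¹) atTop (𝓝 (1 + (1/2) * 0)))
    rw [mul_zero, add_zero] at this
    exact this.inv₀ one_ne_zero
  rw [show (1:ℝ) = (1:ℝ)⁻¹ by norm_num]
  refine h.congr' ?_
  filter_upwards [eventually_gt_atTop (0:ℝ)] with x hx
  field_simp
lemma G_tendsto : Tendsto (fun x : ℝ =>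
    Real.Gamma (x + 1/2) / (Real.sqrt π * Real.Gamma x * Real.sqrt (2*x+1)))
    atTop (𝓝 ((Real.sqrt (2*π))⁻¹)) := by
  have hL : Real.sqrt (1/2) * (Real.sqrt π)⁻¹ = (Real.sqrt (2*π))⁻¹ := by
    rw [Real.sqrt_mul (by norm_num : (0:ℝ) ≤ 2), mul_inv, one_div, Real.sqrt_inv]
  have hup : Tendsto (fun x : ℝ => Real.sqrt x / (Real.sqrt π * Real.sqrt (2*x+1)))
      atTop (𝓝 ((Real.sqrt (2*π))⁻¹)) := by
    rw [← hL]
    refine (tendsto_ratio_half.sqrt.mul_const _).congr' ?_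
    filter_upwards [eventually_gt_atTop (0:ℝ)] with x hx
    rw [Real.sqrt_div hx.le]
    ring
  have hlow : Tendsto (fun x : ℝ =>
      x / (Real.sqrt π * Real.sqrt (x+1/2) * Real.sqrt (2*x+1)))
      atTop (𝓝 ((Real.sqrt (2*π))⁻¹)) := by
    have := ((tendsto_ratio_one.sqrt.mul tendsto_ratio_half.sqrt).mul_const
      ((Real.sqrt π)⁻¹))
    rw [Real.sqrt_one, one_mul, hL] at this
    refine this.congr' ?_
    filter_upwards [eventually_gt_atTop (0:ℝ)] with x hx
    rw [Real.sqrt_div hx.le, Real.sqrt_div hx.le, div_mul_div_comm,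
      Real.mul_self_sqrt hx.le]
    ring
  refine tendsto_of_tendsto_of_tendsto_of_le_of_le' hlow hup ?_ ?_
  · filter_upwards [eventually_ge_atTop (1:ℝ)] with x hx1
    have hx0 : (0:ℝ) < x := lt_of_lt_of_le one_pos hx1
    rw [div_le_div_iff₀ (by positivity) (by positivity)]
    calc x * (Real.sqrt π * Real.Gamma x * Real.sqrt (2*x+1))
        = (x * Real.Gamma x) * (Real.sqrt π * Real.sqrt (2*x+1)) := by ring
      _ ≤ (Real.Gamma (x + 1/2) * Real.sqrt (x+1/2)) *
            (Real.sqrt π * Real.sqrt (2*x+1)) :=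
          mul_le_mul_of_nonneg_right (gautschi_lower hx0) (by positivity)
      _ = Real.Gamma (x + 1/2) *
            (Real.sqrt π * Real.sqrt (x+1/2) * Real.sqrt (2*x+1)) := by ring
  · filter_upwards [eventually_ge_atTop (1:ℝ)] with x hx1
    have hx0 : (0:ℝ) < x := lt_of_lt_of_le one_pos hx1
    have hG : 0 < Real.Gamma x := Real.Gamma_pos_of_pos hx0
    rw [div_le_div_iff₀ (by positivity) (by positivity)]
    calc Real.Gamma (x + 1/2) * (Real.sqrt π * Real.sqrt (2*x+1))
        ≤ (Real.Gamma x * Real.sqrt x) * (Real.sqrt π * Real.sqrt (2*x+1)) :=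
          mul_le_mul_of_nonneg_right (gautschi_upper hx0) (by positivity)
      _ = Real.sqrt x * (Real.sqrt π * Real.Gamma x * Real.sqrt (2*x+1)) := by ring

lemma prod_eq (M : ℕ) : ((Real.sqrt (2*Real.pi))⁻¹ : ℝ) ^ M
    = (2*Real.pi) ^ (-(M:ℝ)/2) := by
  have h2π : (0:ℝ) < 2*Real.pi := by positivity
  rw [show (-(M:ℝ)/2) = (-(1/2:ℝ))*((M:ℕ):ℝ) by push_cast; ring,
    Real.rpow_mul h2π.le, Real.rpow_natCast]
  congr 1
  rw [Real.sqrt_eq_rpow, ← Real.rpow_neg h2π.le]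

lemma inner_tendsto (M j : ℕ) :
    Tendsto (fun N : ℕ => ((M:ℝ) + N - ((j:ℝ)+1))/2) atTop atTop := by
  have h0 : Tendsto (fun N : ℕ => (N:ℝ)) atTop atTop :=
    tendsto_natCast_atTop_atTop
  have h1 : Tendsto (fun N : ℕ => (N:ℝ) + ((M:ℝ) - ((j:ℝ)+1))) atTop atTop :=
    tendsto_atTop_add_const_right atTop _ h0
  have h2 : Tendsto (fun N : ℕ => ((N:ℝ) + ((M:ℝ) - ((j:ℝ)+1)))/2) atTop atTop :=
    h1.atTop_div_const (by norm_num)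
  exact h2.congr (fun N => by ring)

/-- the normalizing constants `b_{M,N}` of the Poincaré limit
converge to `(2π)^{-M/2}`.  Using `|S¹_K| = 2π^{K/2}/Γ(K/2)`, the constants
`b_{M,N} = ∏_{j=1}^M |S¹_{M+N-j}|/(|S¹_{M+N+1-j}| √(M+N+1-j))` equal the displayed
Gamma-function products, and they converge to `(2π)^{-M/2}` as `N → ∞`. -/
theorem stmt15 (M : ℕ) (hM : 1 ≤ M) :
    Tendsto (fun N : ℕ =>
        ∏ j ∈ Finset.range M,
          Real.Gamma (((M : ℝ) + N + 1 - ((j : ℝ) + 1)) / 2) /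
            (Real.sqrt Real.pi * Real.Gamma (((M : ℝ) + N - ((j : ℝ) + 1)) / 2) *
              Real.sqrt ((M : ℝ) + N + 1 - ((j : ℝ) + 1))))
      atTop (nhds ((2 * Real.pi) ^ (-(M : ℝ) / 2))) := by
  have hfac : ∀ j : ℕ, Tendsto (fun N : ℕ =>
      Real.Gamma (((M : ℝ) + N + 1 - ((j : ℝ) + 1)) / 2) /
        (Real.sqrt Real.pi * Real.Gamma (((M : ℝ) + N - ((j : ℝ) + 1)) / 2) *
          Real.sqrt ((M : ℝ) + N + 1 - ((j : ℝ) + 1))))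
      atTop (𝓝 ((Real.sqrt (2*Real.pi))⁻¹)) := by
    intro j
    refine (G_tendsto.comp (inner_tendsto M j)).congr (fun N => ?_)
    simp only [Function.comp_apply]
    have e1 : ((M:ℝ) + N - ((j:ℝ)+1))/2 + 1/2 = ((M:ℝ) + N + 1 - ((j:ℝ)+1))/2 := by
      ring
    have e2 : 2*(((M:ℝ) + N - ((j:ℝ)+1))/2) + 1 = (M:ℝ) + N + 1 - ((j:ℝ)+1) := by
      ring
    rw [e1, e2]
  have hprod := tendsto_finset_prod (Finset.range M) (fun j _ => hfac j)
  simp only [Finset.prod_const, Finset.card_range] at hprod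
  rw [prod_eq M] at hprod
  exact hprod
end
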